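/- arXiv:1108.4031 — 6 statements merged into one kernel-verified Lean document; each statement's English description precedes it below -/
import Mathlib

section
/- Let $u_0,\dots,u_{m-1},v_0,\dots,v_{m-1}$ be elements of a field with $1+u_iv_j\neq 0$ for all $i,j$, and let $M$ be the $m\times m$ matrix with entries $M_{ij}=\frac{u_i+v_j}{1+u_iv_j}$. Then $\det M = \frac{1}{2}\Big(\prod_{i=0}^{m-1}(1+u_i)\prod_{j=0}^{m-1}(1+v_j) + (-1)^m\prod_{i=0}^{m-1}(1-u_i)\prod_{j=0}^{m-1}(1-v_j)\Big) \cdot \prod_{0\le i<j\le m-1}(u_i-u_j)\prod_{0\le i<j\le m-1}(v_j-v_i)\prod_{i,j=0}^{m-1}(1+u_iv_j)^{-1}$. -/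
open Matrix Polynomial Finset

theorem det_eq_of_forall_col_eq_smul_add_const' {n : Type*} [DecidableEq n] [Fintype n]
    {R : Type*} [CommRing R] {A B : Matrix n n R} (c : n → R) (k : n) (hk : c k = 0)
    (h : ∀ i j, A i j = B i j + c j * B i k) : A.det = B.det := by
  rw [← Matrix.det_transpose A, ← Matrix.det_transpose B]
  exact Matrix.det_eq_of_forall_row_eq_smul_add_const c k hk fun i j => h j i

theorem det_cauchy_one_add {K : Type*} [Field K] :
    ∀ (n : ℕ) (u v : Fin n → K), (∀ i j, 1 + u i * v j ≠ 0) →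
    (Matrix.of fun i j : Fin n => (1 + u i * v j)⁻¹).det =
      (∏ i : Fin n, ∏ j ∈ Finset.Ioi i, (u i - u j)) *
      (∏ i : Fin n, ∏ j ∈ Finset.Ioi i, (v j - v i)) *
      (∏ i : Fin n, ∏ j : Fin n, (1 + u i * v j))⁻¹ := by
  intro n
  induction n with
  | zero =>
    intro u v h
    simp [Matrix.det_fin_zero]
  | succ m ih =>
    intro u v h
    have key : (Matrix.of fun i j : Fin (m+1) => (1 + u i * v j)⁻¹).det =
        (∏ j : Fin (m+1), (1 + u 0 * v j)⁻¹) * (∏ i : Fin m, (u 0 - u i.succ)) *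
        (∏ j : Fin m, (v j.succ - v 0)) * (∏ i : Fin m, (1 + u i.succ * v 0)⁻¹) *
        (Matrix.of fun i j : Fin m => (1 + u i.succ * v j.succ)⁻¹).det := by
      calc
        (Matrix.of fun i j : Fin (m+1) => (1 + u i * v j)⁻¹).det
            = (Matrix.of fun i j : Fin (m+1) => Matrix.vecCons ((1 + u 0 * v j)⁻¹)
                (fun i' => (1 + u i'.succ * v j)⁻¹ - (1 + u 0 * v j)⁻¹) i).det := by
              apply Matrix.det_eq_of_forall_row_eq_smul_add_const (Matrix.vecCons 0 1) 0
                (Matrix.cons_val_zero _ _)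
              intro i j
              refine Fin.cases ?_ (fun i' => ?_) i <;> simp
        _ = (Matrix.of fun i j : Fin (m+1) => (1 + u 0 * v j)⁻¹ *
              (Matrix.vecCons 1 (fun i' => v j * (u 0 - u i'.succ) *
                (1 + u i'.succ * v j)⁻¹) i)).det := by
              congr 1
              ext i j
              refine Fin.cases ?_ (fun i' => ?_) i
              · simp
              · simp only [Matrix.of_apply, Matrix.cons_val_succ]
                rw [inv_sub_inv (h i'.succ j) (h 0 j), div_eq_mul_inv, mul_inv]
                ring
        _ = (∏ j : Fin (m+1), (1 + u 0 * v j)⁻¹) *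
            (Matrix.of fun i j : Fin (m+1) => Matrix.vecCons 1
              (fun i' => v j * (u 0 - u i'.succ) * (1 + u i'.succ * v j)⁻¹) i).det :=
              Matrix.det_mul_row _ _
        _ = (∏ j : Fin (m+1), (1 + u 0 * v j)⁻¹) *
            ((Matrix.of fun i j : Fin (m+1) =>
              (Matrix.vecCons 1 (fun i' => u 0 - u i'.succ) i) *
              (Matrix.vecCons 1 (fun i' => v j * (1 + u i'.succ * v j)⁻¹) i)).det) := by
              congr 2
              ext i j
              refine Fin.cases ?_ (fun i' => ?_) i <;> simp <;> ring
        _ = (∏ j : Fin (m+1), (1 + u 0 * v j)⁻¹) *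
            ((∏ i : Fin (m+1), Matrix.vecCons (1:K) (fun i' => u 0 - u i'.succ) i) *
             (Matrix.of fun i j : Fin (m+1) =>
              Matrix.vecCons 1 (fun i' => v j * (1 + u i'.succ * v j)⁻¹) i).det) := by
              congr 1; exact Matrix.det_mul_column _ _
        _ = (∏ j : Fin (m+1), (1 + u 0 * v j)⁻¹) *
            ((∏ i : Fin m, (u 0 - u i.succ)) *
             (Matrix.of fun i j : Fin (m+1) =>
              Matrix.vecCons 1 (fun i' => v j * (1 + u i'.succ * v j)⁻¹) i).det) := by
              have hp : ∏ i : Fin (m+1), Matrix.vecCons (1:K) (fun i' => u 0 - u i'.succ) i =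
                  ∏ i : Fin m, (u 0 - u i.succ) := by
                rw [Fin.prod_univ_succ]; simp
              rw [hp]
        _ = (∏ j : Fin (m+1), (1 + u 0 * v j)⁻¹) *
            ((∏ i : Fin m, (u 0 - u i.succ)) *
             (Matrix.of fun i j : Fin (m+1) => Matrix.vecCons
                (Matrix.vecCons 1 (fun i' => v 0 * (1 + u i'.succ * v 0)⁻¹) i)
                (fun j' => Matrix.vecCons 0 (fun i' => (v j'.succ - v 0) *
                  ((1 + u i'.succ * v 0)⁻¹ * (1 + u i'.succ * v j'.succ)⁻¹)) i) j).det) := by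
              congr 2
              apply det_eq_of_forall_col_eq_smul_add_const' (Matrix.vecCons 0 1) 0
                (Matrix.cons_val_zero _ _)
              intro i j
              refine Fin.cases ?_ (fun j' => ?_) j
              · simp
              · refine Fin.cases ?_ (fun i' => ?_) i
                · simp
                · simp only [Matrix.of_apply, Matrix.cons_val_succ, Matrix.cons_val_zero,
                    Matrix.cons_val_one, Matrix.head_cons, Pi.one_apply]
                  have ha := h i'.succ j'.succ
                  have hb := h i'.succ 0
                  have ha' : 1 + v j'.succ * u i'.succ ≠ 0 := by rwa [mul_comm (v _)]
                  field_simp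
                  ring
        _ = (∏ j : Fin (m+1), (1 + u 0 * v j)⁻¹) * (∏ i : Fin m, (u 0 - u i.succ)) *
            (Matrix.of fun i j : Fin m => (v j.succ - v 0) *
              ((1 + u i.succ * v 0)⁻¹ * (1 + u i.succ * v j.succ)⁻¹)).det := by
              rw [Matrix.det_succ_row_zero, Fin.sum_univ_succ]
              simp [Matrix.submatrix]
              ring
        _ = (∏ j : Fin (m+1), (1 + u 0 * v j)⁻¹) * (∏ i : Fin m, (u 0 - u i.succ)) *
            ((∏ j : Fin m, (v j.succ - v 0)) *
            (Matrix.of fun i j : Fin m =>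
              (1 + u i.succ * v 0)⁻¹ * (1 + u i.succ * v j.succ)⁻¹).det) := by
              congr 1; exact Matrix.det_mul_row _ _
        _ = (∏ j : Fin (m+1), (1 + u 0 * v j)⁻¹) * (∏ i : Fin m, (u 0 - u i.succ)) *
            ((∏ j : Fin m, (v j.succ - v 0)) * ((∏ i : Fin m, (1 + u i.succ * v 0)⁻¹) *
            (Matrix.of fun i j : Fin m => (1 + u i.succ * v j.succ)⁻¹).det)) := by
              congr 2; exact Matrix.det_mul_column _ _
        _ = (∏ j : Fin (m+1), (1 + u 0 * v j)⁻¹) * (∏ i : Fin m, (u 0 - u i.succ)) *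
        (∏ j : Fin m, (v j.succ - v 0)) * (∏ i : Fin m, (1 + u i.succ * v 0)⁻¹) *
        (Matrix.of fun i j : Fin m => (1 + u i.succ * v j.succ)⁻¹).det := by ring
    have ih' := ih (fun i => u i.succ) (fun j => v j.succ) (fun i j => h i.succ j.succ)
    rw [key, ih']
    rw [Fin.prod_univ_succ (f := fun i => ∏ j ∈ Finset.Ioi i, (u i - u j)),
      Fin.prod_univ_succ (f := fun i => ∏ j ∈ Finset.Ioi i, (v j - v i)),
      Fin.prod_univ_succ (f := fun i => ∏ j : Fin (m+1), (1 + u i * v j))]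
    simp only [Fin.prod_Ioi_zero, Fin.prod_Ioi_succ]
    have h1 : ∀ i : Fin m, (1 + u i.succ * v 0) ≠ 0 := fun i => h i.succ 0
    have h2 : ∀ j : Fin (m+1), (1 + u 0 * v j) ≠ 0 := fun j => h 0 j
    rw [Finset.prod_congr rfl (fun (i : Fin m) _ => Fin.prod_univ_succ
        (f := fun j => (1 + u i.succ * v j)))]
    rw [Finset.prod_mul_distrib]
    simp only [Finset.prod_inv_distrib]
    field_simp

theorem det_sub_ones {R : Type*} [CommRing R] {m : ℕ} (A : Matrix (Fin m) (Fin m) R) :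
    (Matrix.of fun i j : Fin m => A i j - 1).det =
      A.det - ∑ i : Fin m, (A.updateRow i (fun _ => 1)).det := by
  classical
  set c : Fin m → R := fun _ => (-1 : R) with hc
  have h0 : (Matrix.of fun i j : Fin m => A i j - 1) =
      ((fun _ : Fin m => c) + fun i : Fin m => A i) := by
    funext i j
    simp [hc, sub_eq_add_neg, add_comm]
  set D := (Matrix.detRowAlternating (R := R) (n := Fin m)).toMultilinearMap with hD
  have hdet : (Matrix.of fun i j : Fin m => A i j - 1).det =
      D ((fun _ : Fin m => c) + fun i : Fin m => A i) := by
    rw [h0]; rfl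
  rw [hdet, D.map_add_univ (fun _ => c) (fun i => A i)]
  set g : Finset (Fin m) → R :=
    fun s => D (s.piecewise (fun _ : Fin m => c) fun i => A i) with hg
  have hzero : ∀ s : Finset (Fin m), 1 < s.card → g s = 0 := by
    intro s hs
    obtain ⟨a, ha, b, hb, hab⟩ := Finset.one_lt_card.mp hs
    exact Matrix.det_zero_of_row_eq hab (by
      show s.piecewise (fun _ => c) (fun i => A i) a = s.piecewise (fun _ => c) (fun i => A i) b
      rw [Finset.piecewise_eq_of_mem _ _ _ ha, Finset.piecewise_eq_of_mem _ _ _ hb])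
  have hempty : g ∅ = A.det := by
    simp only [hg, Finset.piecewise_empty]
    rfl
  have hsingle : ∀ i : Fin m, g {i} = - (A.updateRow i (fun _ => 1)).det := by
    intro i
    have : ({i} : Finset (Fin m)).piecewise (fun _ : Fin m => c) (fun i => A i) =
        A.updateRow i c := by
      rw [Finset.piecewise_singleton]
      rfl
    show D _ = _
    rw [this]
    show (A.updateRow i c).det = _
    have hc1 : c = (-1 : R) • (fun _ : Fin m => (1 : R)) := by
      funext j; simp [hc]
    rw [hc1, Matrix.det_updateRow_smul]
    ring
  have hfilter : Finset.univ.filter (fun s : Finset (Fin m) => s.card ≤ 1) =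
      insert ∅ (Finset.univ.image fun i : Fin m => ({i} : Finset (Fin m))) := by
    ext s
    constructor
    · intro hs
      simp only [Finset.mem_filter] at hs
      rcases s.eq_empty_or_nonempty with h | ⟨x, hx⟩
      · simp [h]
      · have hsx : s = {x} := Finset.eq_singleton_iff_unique_mem.mpr
          ⟨hx, fun y hy => Finset.card_le_one.mp hs.2 y hy x hx⟩
        simp only [Finset.mem_insert, Finset.mem_image, Finset.mem_univ]
        exact Or.inr ⟨x, ⟨trivial, hsx.symm⟩⟩
    · intro hs
      simp only [Finset.mem_insert, Finset.mem_image] at hs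
      rcases hs with h | ⟨x, _, h⟩
      · simp [h]
      · simp [← h]
  calc
    ∑ s : Finset (Fin m), g s
        = (∑ s ∈ Finset.univ.filter (fun s : Finset (Fin m) => s.card ≤ 1), g s) +
          ∑ s ∈ Finset.univ.filter (fun s : Finset (Fin m) => ¬ s.card ≤ 1), g s :=
      (Finset.sum_filter_add_sum_filter_not _ _ _).symm
    _ = ∑ s ∈ Finset.univ.filter (fun s : Finset (Fin m) => s.card ≤ 1), g s := by
      have hnot : ∑ s ∈ Finset.univ.filter (fun s : Finset (Fin m) => ¬ s.card ≤ 1), g s = 0 :=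
        Finset.sum_eq_zero fun s hs => hzero s (by
          simp only [Finset.mem_filter, not_le] at hs; exact hs.2)
      rw [hnot, add_zero]
    _ = g ∅ + ∑ s ∈ Finset.univ.image (fun i : Fin m => ({i} : Finset (Fin m))), g s := by
      rw [hfilter, Finset.sum_insert (by simp)]
    _ = A.det - ∑ i : Fin m, (A.updateRow i (fun _ => 1)).det := by
      rw [hempty, Finset.sum_image (fun a _ b _ hab => Finset.singleton_injective hab)]
      rw [Finset.sum_congr rfl fun i _ => hsingle i]
      rw [Finset.sum_neg_distrib]
      ring

theorem leadingCoeff_lagrange_basis {K : Type*} [Field K] [DecidableEq K] (s : Finset K) (x : K) (hx : x ∈ s) :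
    (Lagrange.basis s id x).leadingCoeff = ∏ y ∈ s.erase x, (x - y)⁻¹ := by
  unfold Lagrange.basis
  rw [Polynomial.leadingCoeff_prod]
  refine Finset.prod_congr rfl fun y hy => ?_
  have hxy : x ≠ y := fun h => (Finset.mem_erase.mp hy).1 h.symm
  unfold Lagrange.basisDivisor
  rw [leadingCoeff_mul, leadingCoeff_C, (monic_X_sub_C _).leadingCoeff, mul_one]
  simp

theorem divided_diff_zero {K : Type*} [Field K] [DecidableEq K] (s : Finset K) (p : Polynomial K)
    (hdeg : p.degree < ((s.card - 1 : ℕ) : WithBot ℕ)) :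
    ∑ x ∈ s, p.eval x * ∏ y ∈ s.erase x, (x - y)⁻¹ = 0 := by
  have hinj : Set.InjOn (id : K → K) s := Function.injective_id.injOn
  have hlt : p.degree < s.card := lt_of_lt_of_le hdeg (by
    exact_mod_cast WithBot.coe_le_coe.mpr (Nat.sub_le _ _))
  have hinterp := Lagrange.eq_interpolate (v := id) hinj hlt
  have hcoeff : p.coeff (s.card - 1) = 0 := Polynomial.coeff_eq_zero_of_degree_lt hdeg
  rw [hinterp] at hcoeff
  rw [Lagrange.interpolate_apply, Polynomial.finset_sum_coeff] at hcoeff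
  rw [← hcoeff]
  refine Finset.sum_congr rfl fun x hx => ?_
  rw [Polynomial.coeff_C_mul, id_eq]
  congr 1
  rw [← leadingCoeff_lagrange_basis s x hx]
  rw [Polynomial.leadingCoeff, Lagrange.natDegree_basis hinj hx]

theorem star_identity {K : Type*} [Field K] [DecidableEq K] (h2 : (2:K) ≠ 0) (m : ℕ)
    (u : Fin m → K) (huinj : Function.Injective u)
    (hu1 : ∀ i, u i ≠ 1) (hum1 : ∀ i, u i ≠ -1)
    (F : Polynomial K) (hF : F.degree < ((m + 1 : ℕ) : WithBot ℕ)) :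
    ∑ i : Fin m, F.eval (u i) * (∏ k ∈ Finset.univ.erase i, (1 - u k ^ 2)) *
        (∏ k ∈ Finset.univ.erase i, (u i - u k))⁻¹ =
      2⁻¹ * (F.eval 1 * ∏ k, (1 + u k) - (-1) ^ m * F.eval (-1) * ∏ k, (1 - u k)) := by
  have h1m : (1:K) ≠ -1 := by
    intro hh; apply h2; linear_combination hh
  set T := Finset.univ.image u with hT
  have h1T : (1:K) ∉ T := by
    rw [hT]
    intro hmem
    obtain ⟨i, -, hi⟩ := Finset.mem_image.mp hmem
    exact hu1 i hi
  have hm1T : (-1:K) ∉ T := by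
    rw [hT]
    intro hmem
    obtain ⟨i, -, hi⟩ := Finset.mem_image.mp hmem
    exact hum1 i hi
  have h1s : (1:K) ∉ insert (-1:K) T := by
    simp only [Finset.mem_insert]
    rintro (hh | hh)
    · exact h1m hh
    · exact h1T hh
  set s := insert (1:K) (insert (-1:K) T) with hs
  have hcard : s.card = m + 2 := by
    rw [hs, Finset.card_insert_of_notMem h1s, Finset.card_insert_of_notMem hm1T,
      Finset.card_image_of_injective _ huinj, Finset.card_univ, Fintype.card_fin]
  have hdd := divided_diff_zero s F (by rw [hcard]; simpa using hF)
  rw [hs, Finset.sum_insert h1s, Finset.sum_insert hm1T,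
    Finset.sum_image (fun a _ b _ hab => huinj hab)] at hdd
  -- rewrite the erase sets
  rw [Finset.erase_insert h1s] at hdd
  have e2 : (insert (1:K) (insert (-1:K) T)).erase (-1) = insert (1:K) T := by
    rw [Finset.erase_insert_of_ne h1m, Finset.erase_insert hm1T]
  rw [e2] at hdd
  rw [Finset.prod_insert hm1T, Finset.prod_insert h1T] at hdd
  rw [Finset.prod_image (fun a _ b _ hab => huinj hab),
    Finset.prod_image (fun a _ b _ hab => huinj hab)] at hdd
  have e3 : ∀ i : Fin m, F.eval (u i) * ∏ y ∈ (insert (1:K) (insert (-1:K) T)).erase (u i),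
      (u i - y)⁻¹ = F.eval (u i) * ((u i - 1)⁻¹ * ((u i + 1)⁻¹ *
        (∏ k ∈ Finset.univ.erase i, (u i - u k)⁻¹))) := by
    intro i
    have hue : T.erase (u i) = (Finset.univ.erase i).image u := by
      rw [hT, Finset.image_erase huinj]
    have h1e : (1:K) ∉ insert (-1:K) (T.erase (u i)) := by
      simp only [Finset.mem_insert, Finset.mem_erase]
      rintro (hh | hh)
      · exact h1m hh
      · exact h1T hh.2
    have hm1e : (-1:K) ∉ T.erase (u i) := fun hh => hm1T (Finset.mem_of_mem_erase hh)
    rw [Finset.erase_insert_of_ne (fun hh => hu1 i hh.symm),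
      Finset.erase_insert_of_ne (fun hh => hum1 i hh.symm),
      Finset.prod_insert h1e, Finset.prod_insert hm1e, hue,
      Finset.prod_image (fun a ha b hb hab => huinj hab)]
    rw [sub_neg_eq_add]
  rw [Finset.sum_congr rfl (fun i _ => e3 i)] at hdd
  -- nonvanishing facts
  have hA : ∀ k, (1:K) + u k ≠ 0 := by
    intro k hk; exact hum1 k (by linear_combination hk)
  have hB : ∀ k, (1:K) - u k ≠ 0 := by
    intro k hk; exact hu1 k (by linear_combination -hk)
  have hAne : (∏ k, ((1:K) + u k)) ≠ 0 := Finset.prod_ne_zero_iff.mpr fun k _ => hA k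
  have hBne : (∏ k, ((1:K) - u k)) ≠ 0 := Finset.prod_ne_zero_iff.mpr fun k _ => hB k
  -- per-term transformation
  have per : ∀ i : Fin m, F.eval (u i) * (∏ k ∈ Finset.univ.erase i, (1 - u k ^ 2)) *
      (∏ k ∈ Finset.univ.erase i, (u i - u k))⁻¹ =
      (-((∏ k, (1 + u k)) * (∏ k, (1 - u k)))) * (F.eval (u i) * ((u i - 1)⁻¹ * ((u i + 1)⁻¹ *
        (∏ k ∈ Finset.univ.erase i, (u i - u k)⁻¹)))) := by
    intro i
    have hsplit : (∏ k ∈ Finset.univ.erase i, ((1:K) - u k ^ 2)) =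
        (∏ k ∈ Finset.univ.erase i, (1 - u k)) * (∏ k ∈ Finset.univ.erase i, (1 + u k)) := by
      rw [← Finset.prod_mul_distrib]
      exact Finset.prod_congr rfl fun k _ => by ring
    have hAi : (∏ k, ((1:K) + u k)) = (1 + u i) * ∏ k ∈ Finset.univ.erase i, (1 + u k) :=
      (Finset.mul_prod_erase _ _ (Finset.mem_univ i)).symm
    have hBi : (∏ k, ((1:K) - u k)) = (1 - u i) * ∏ k ∈ Finset.univ.erase i, (1 - u k) :=
      (Finset.mul_prod_erase _ _ (Finset.mem_univ i)).symm
    have hprodinv : (∏ k ∈ Finset.univ.erase i, (u i - u k)⁻¹) =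
        (∏ k ∈ Finset.univ.erase i, (u i - u k))⁻¹ := by
      rw [Finset.prod_inv_distrib]
    have h1 : u i - 1 ≠ 0 := fun hh => hu1 i (by linear_combination hh)
    have h2' : u i + 1 ≠ 0 := fun hh => hum1 i (by linear_combination hh)
    rw [hsplit, hAi, hBi, hprodinv]
    have key1 : -((1 + u i) * (1 - u i)) * ((u i - 1)⁻¹ * (u i + 1)⁻¹) = 1 := by
      field_simp
      ring
    linear_combination (-(F.eval (u i) * ((∏ k ∈ Finset.univ.erase i, (1 - u k)) *
      (∏ k ∈ Finset.univ.erase i, (1 + u k))) *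
      (∏ k ∈ Finset.univ.erase i, (u i - u k))⁻¹)) * key1
  rw [Finset.sum_congr rfl (fun i _ => per i), ← Finset.mul_sum]
  -- conclude
  have hprodB : (∏ k : Fin m, ((1:K) - u k)⁻¹) = (∏ k : Fin m, ((1:K) - u k))⁻¹ := by
    rw [Finset.prod_inv_distrib]
  have hprodA : (∏ k : Fin m, ((-1:K) - u k)⁻¹) =
      ((-1)^m * ∏ k : Fin m, ((1:K) + u k))⁻¹ := by
    rw [Finset.prod_inv_distrib]
    congr 1
    calc ∏ k : Fin m, ((-1:K) - u k) = ∏ k : Fin m, (-1) * (1 + u k) :=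
          Finset.prod_congr rfl fun k _ => by ring
      _ = (-1)^m * ∏ k, (1 + u k) := by
          rw [Finset.prod_mul_distrib, Finset.prod_const, Finset.card_univ, Fintype.card_fin]
  rw [hprodB, hprodA] at hdd
  have hS : ∑ i : Fin m, F.eval (u i) * ((u i - 1)⁻¹ * ((u i + 1)⁻¹ *
      (∏ k ∈ Finset.univ.erase i, (u i - u k)⁻¹))) =
      -(F.eval 1 * ((1 - -1)⁻¹ * (∏ k, ((1:K) - u k))⁻¹) +
        F.eval (-1) * ((-1 - 1)⁻¹ * ((-1)^m * ∏ k, ((1:K) + u k))⁻¹)) := by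
    linear_combination hdd
  rw [hS]
  have h1m1 : (1:K) - -1 = 2 := by ring
  have hm11 : (-1:K) - 1 = -2 := by ring
  rw [h1m1, hm11]
  have hm1ne : ((-1:K))^m ≠ 0 := pow_ne_zero _ (neg_ne_zero.mpr one_ne_zero)
  set w : K := (-1)^m with hwdef
  have hww : w * w = 1 := by rw [hwdef, ← pow_add, ← two_mul, pow_mul]; norm_num
  have hwinv : w⁻¹ = w := inv_eq_of_mul_eq_one_right hww
  rw [mul_inv, hwinv]
  field_simp
  ring

theorem prod_erase_eq_Iio_mul_Ioi {K : Type*} [CommRing K] {m : ℕ} (i : Fin m) (f : Fin m → K) :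
    ∏ k ∈ Finset.univ.erase i, f k = (∏ k ∈ Finset.Iio i, f k) * ∏ k ∈ Finset.Ioi i, f k := by
  have hset : Finset.univ.erase i = Finset.Iio i ∪ Finset.Ioi i := by
    ext k
    simp only [Finset.mem_erase, Finset.mem_univ, and_true, Finset.mem_union, Finset.mem_Iio,
      Finset.mem_Ioi]
    exact ⟨fun hk => hk.lt_or_gt, fun hk => hk.elim (fun h => h.ne) fun h => h.ne'⟩
  rw [hset, Finset.prod_union]
  rw [Finset.disjoint_left]
  intro k hk hk'
  exact absurd (Finset.mem_Iio.mp hk) (not_lt_of_gt (Finset.mem_Ioi.mp hk'))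

theorem D_split {K : Type*} [CommRing K] {m : ℕ} (w : Fin m → K) (i : Fin m) :
    ∏ a, ∏ b ∈ Finset.Ioi a, (w a - w b) =
      ((∏ a ∈ Finset.Iio i, (w a - w i)) * ∏ b ∈ Finset.Ioi i, (w i - w b)) *
      ∏ a ∈ Finset.univ.erase i, ∏ b ∈ (Finset.Ioi a).erase i, (w a - w b) := by
  conv_lhs => rw [← Finset.mul_prod_erase Finset.univ _ (Finset.mem_univ i)]
  have h1 : ∀ a ∈ Finset.univ.erase i, ∏ b ∈ Finset.Ioi a, (w a - w b) =
      (if a < i then (w a - w i) else 1) * ∏ b ∈ (Finset.Ioi a).erase i, (w a - w b) := by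
    intro a _
    by_cases hai : a < i
    · rw [if_pos hai]
      exact (Finset.mul_prod_erase (Finset.Ioi a) _ (Finset.mem_Ioi.mpr hai)).symm
    · rw [if_neg hai, one_mul, Finset.erase_eq_of_notMem]
      intro hmem
      exact hai (Finset.mem_Ioi.mp hmem)
  rw [Finset.prod_congr rfl h1, Finset.prod_mul_distrib]
  have h2 : ∏ a ∈ Finset.univ.erase i, (if a < i then (w a - w i) else 1) =
      ∏ a ∈ Finset.Iio i, (w a - w i) := by
    rw [← Finset.prod_filter]
    congr 1
    ext a
    simp only [Finset.mem_filter, Finset.mem_erase, Finset.mem_univ, and_true, Finset.mem_Iio]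
    exact ⟨fun h => h.2, fun h => ⟨h.ne, h⟩⟩
  rw [h2]
  ring

theorem vprod_update {K : Type*} [CommRing K] {m : ℕ} (u : Fin m → K) (i : Fin m) (x : K) :
    (∏ a, ∏ b ∈ Finset.Ioi a, (Function.update u i x a - Function.update u i x b)) *
      ∏ k ∈ Finset.univ.erase i, (u i - u k) =
    (∏ a, ∏ b ∈ Finset.Ioi a, (u a - u b)) * ∏ k ∈ Finset.univ.erase i, (x - u k) := by
  rw [D_split (Function.update u i x) i, D_split u i,
    prod_erase_eq_Iio_mul_Ioi i (fun k => u i - u k),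
    prod_erase_eq_Iio_mul_Ioi i (fun k => x - u k)]
  have hE : ∏ a ∈ Finset.univ.erase i, ∏ b ∈ (Finset.Ioi a).erase i,
      (Function.update u i x a - Function.update u i x b) =
      ∏ a ∈ Finset.univ.erase i, ∏ b ∈ (Finset.Ioi a).erase i, (u a - u b) := by
    refine Finset.prod_congr rfl fun a ha => Finset.prod_congr rfl fun b hb => ?_
    rw [Function.update_of_ne (Finset.mem_erase.mp ha).1,
      Function.update_of_ne (Finset.mem_erase.mp hb).1]
  have hIio : ∏ a ∈ Finset.Iio i, (Function.update u i x a - Function.update u i x i) =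
      ∏ a ∈ Finset.Iio i, (u a - x) := by
    refine Finset.prod_congr rfl fun a ha => ?_
    rw [Function.update_of_ne (Finset.mem_Iio.mp ha).ne, Function.update_self]
  have hIoi : ∏ b ∈ Finset.Ioi i, (Function.update u i x i - Function.update u i x b) =
      ∏ b ∈ Finset.Ioi i, (x - u b) := by
    refine Finset.prod_congr rfl fun b hb => ?_
    rw [Function.update_of_ne (Finset.mem_Ioi.mp hb).ne', Function.update_self]
  rw [hE, hIio, hIoi]
  have key : (∏ a ∈ Finset.Iio i, (u a - x)) * (∏ a ∈ Finset.Iio i, (u i - u a)) =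
      (∏ a ∈ Finset.Iio i, (u a - u i)) * (∏ a ∈ Finset.Iio i, (x - u a)) := by
    rw [← Finset.prod_mul_distrib, ← Finset.prod_mul_distrib]
    exact Finset.prod_congr rfl fun a _ => by ring
  linear_combination ((∏ b ∈ Finset.Ioi i, (x - u b)) * (∏ b ∈ Finset.Ioi i, (u i - u b)) *
    ∏ a ∈ Finset.univ.erase i, ∏ b ∈ (Finset.Ioi a).erase i, (u a - u b)) * key

theorem det_cauchy_like_generic {K : Type*} [Field K] [DecidableEq K] (h2 : (2:K) ≠ 0) (m : ℕ)
    (u v : Fin m → K) (h : ∀ i j, 1 + u i * v j ≠ 0)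
    (huinj : Function.Injective u) (hu1 : ∀ i, u i ≠ 1) (hum1 : ∀ i, u i ≠ -1)
    (hv : ∀ j, 1 + v j ≠ 0) :
    (Matrix.of fun i j : Fin m => (u i + v j) / (1 + u i * v j)).det =
      (2 : K)⁻¹ * ((∏ i, (1 + u i)) * (∏ j, (1 + v j)) +
          (-1) ^ m * (∏ i, (1 - u i)) * (∏ j, (1 - v j))) *
      (∏ i, ∏ j ∈ Finset.Ioi i, (u i - u j)) *
      (∏ i, ∏ j ∈ Finset.Ioi i, (v j - v i)) *
      (∏ i, ∏ j, (1 + u i * v j))⁻¹ := by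
  classical
  set A' : Matrix (Fin m) (Fin m) K :=
    Matrix.of fun i j => (1 + u i) * ((1 + v j) * (1 + u i * v j)⁻¹) with hA'
  have hM : (Matrix.of fun i j : Fin m => (u i + v j) / (1 + u i * v j)) =
      Matrix.of fun i j : Fin m => A' i j - 1 := by
    ext i j
    simp only [Matrix.of_apply, hA']
    have hij := h i j
    rw [div_eq_mul_inv]
    linear_combination (-1 : K) * (mul_inv_cancel₀ hij)
  have hC := det_cauchy_one_add m u v h
  have hdetA' : A'.det = (∏ i, (1 + u i)) * ((∏ j, (1 + v j)) *
      (Matrix.of fun i j : Fin m => (1 + u i * v j)⁻¹).det) := by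
    rw [hA']
    calc (Matrix.of fun i j : Fin m => (1 + u i) * ((1 + v j) * (1 + u i * v j)⁻¹)).det
        = (∏ i, (1 + u i)) *
          (Matrix.of fun i j : Fin m => (1 + v j) * (1 + u i * v j)⁻¹).det :=
          Matrix.det_mul_column _ _
      _ = (∏ i, (1 + u i)) * ((∏ j, (1 + v j)) *
          (Matrix.of fun i j : Fin m => (1 + u i * v j)⁻¹).det) := by
          congr 1; exact Matrix.det_mul_row _ _
  set D := ∏ i, ∏ j ∈ Finset.Ioi i, (u i - u j) with hD
  set Dv := ∏ i, ∏ j ∈ Finset.Ioi i, (v j - v i) with hDv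
  set P := ∏ i, ∏ j, (1 + u i * v j) with hP
  -- the polynomial F
  set F : Polynomial K := ∏ j, (Polynomial.C (v j) * Polynomial.X + 1) with hF
  have hFeval : ∀ x : K, F.eval x = ∏ j, (1 + x * v j) := by
    intro x
    rw [hF, Polynomial.eval_prod]
    exact Finset.prod_congr rfl fun j _ => by
      simp only [Polynomial.eval_add, Polynomial.eval_mul, Polynomial.eval_C, Polynomial.eval_X,
        Polynomial.eval_one]
      ring
  have hFdeg : F.degree < ((m + 1 : ℕ) : WithBot ℕ) := by
    have h1 : F.natDegree ≤ m := by
      refine le_trans (Polynomial.natDegree_prod_le _ _) ?_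
      calc ∑ j : Fin m, (Polynomial.C (v j) * Polynomial.X + 1).natDegree
          ≤ ∑ _j : Fin m, 1 := by
            refine Finset.sum_le_sum fun j _ => ?_
            refine le_trans (Polynomial.natDegree_add_le _ _) (max_le ?_ ?_)
            · exact le_trans (Polynomial.natDegree_C_mul_le _ _)
                (le_of_eq Polynomial.natDegree_X)
            · simp
        _ = m := by simp
    calc F.degree ≤ (F.natDegree : WithBot ℕ) := Polynomial.degree_le_natDegree
      _ < ((m + 1 : ℕ) : WithBot ℕ) := by
          exact_mod_cast Nat.lt_succ_of_le h1
  have star := star_identity h2 m u huinj hu1 hum1 F hFdeg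
  -- the update-row determinants
  have hupd : ∀ i : Fin m, (A'.updateRow i fun _ => 1).det =
      (∏ j, (1 + v j)) * ((∏ k ∈ Finset.univ.erase i, (1 + u k)) *
        (Matrix.of fun k j : Fin m => (1 + Function.update u i 1 k * v j)⁻¹).det) := by
    intro i
    have hmat : A'.updateRow i (fun _ => 1) = Matrix.of fun k j =>
        (1 + v j) * ((if k = i then 1 else (1 + u k)) *
          (1 + Function.update u i 1 k * v j)⁻¹) := by
      ext k j
      rcases eq_or_ne k i with rfl | hk
      · rw [Matrix.updateRow_self]
        simp only [Matrix.of_apply, eq_self_iff_true, if_true, Function.update_self, one_mul]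
        exact (mul_inv_cancel₀ (hv j)).symm
      · rw [Matrix.updateRow_ne hk]
        simp only [Matrix.of_apply, if_neg hk, Function.update_of_ne hk, hA']
        ring
    rw [hmat]
    calc (Matrix.of fun k j : Fin m => (1 + v j) * ((if k = i then 1 else (1 + u k)) *
          (1 + Function.update u i 1 k * v j)⁻¹)).det
        = (∏ j, (1 + v j)) * (Matrix.of fun k j : Fin m => (if k = i then 1 else (1 + u k)) *
          (1 + Function.update u i 1 k * v j)⁻¹).det := Matrix.det_mul_row _ _
      _ = (∏ j, (1 + v j)) * ((∏ k, (if k = i then 1 else (1 + u k))) *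
          (Matrix.of fun k j : Fin m => (1 + Function.update u i 1 k * v j)⁻¹).det) := by
          congr 1; exact Matrix.det_mul_column _ _
      _ = (∏ j, (1 + v j)) * ((∏ k ∈ Finset.univ.erase i, (1 + u k)) *
          (Matrix.of fun k j : Fin m => (1 + Function.update u i 1 k * v j)⁻¹).det) := by
          congr 2
          rw [← Finset.mul_prod_erase Finset.univ _ (Finset.mem_univ i), if_pos rfl, one_mul]
          exact Finset.prod_congr rfl fun k hk => if_neg (Finset.mem_erase.mp hk).1
  have hterm : ∀ i : Fin m, (A'.updateRow i fun _ => 1).det =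
      (F.eval (u i) * (∏ k ∈ Finset.univ.erase i, (1 - u k ^ 2)) *
        (∏ k ∈ Finset.univ.erase i, (u i - u k))⁻¹) * (D * (Dv * P⁻¹)) := by
    intro i
    have hup : ∀ k j, 1 + Function.update u i 1 k * v j ≠ 0 := by
      intro k j
      rcases eq_or_ne k i with rfl | hk
      · rw [Function.update_self, one_mul]; exact hv j
      · rw [Function.update_of_ne hk]; exact h k j
    have hSine : (∏ k ∈ Finset.univ.erase i, (u i - u k)) ≠ 0 :=
      Finset.prod_ne_zero_iff.mpr fun k hk => sub_ne_zero_of_ne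
        fun e => (Finset.mem_erase.mp hk).1 (huinj e).symm
    rw [hupd i, det_cauchy_one_add m (Function.update u i 1) v hup]
    have hPu : (∏ k, ∏ j, (1 + Function.update u i 1 k * v j)) =
        (∏ j, (1 + v j)) * ∏ k ∈ Finset.univ.erase i, ∏ j, (1 + u k * v j) := by
      rw [← Finset.mul_prod_erase Finset.univ _ (Finset.mem_univ i)]
      congr 1
      · exact Finset.prod_congr rfl fun j _ => by rw [Function.update_self, one_mul]
      · exact Finset.prod_congr rfl fun k hk => Finset.prod_congr rfl fun j _ => by
          rw [Function.update_of_ne (Finset.mem_erase.mp hk).1]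
    have hDu' : (∏ a, ∏ b ∈ Finset.Ioi a,
        (Function.update u i 1 a - Function.update u i 1 b)) =
        D * (∏ k ∈ Finset.univ.erase i, (1 - u k)) *
          (∏ k ∈ Finset.univ.erase i, (u i - u k))⁻¹ := by
      rw [eq_mul_inv_iff_mul_eq₀ hSine, hD]
      exact vprod_update u i 1
    have hPdecomp : P = (∏ j, (1 + u i * v j)) *
        ∏ k ∈ Finset.univ.erase i, ∏ j, (1 + u k * v j) :=
      (Finset.mul_prod_erase Finset.univ _ (Finset.mem_univ i)).symm
    have hsq : (∏ k ∈ Finset.univ.erase i, (1 - u k ^ 2)) =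
        (∏ k ∈ Finset.univ.erase i, (1 + u k)) * ∏ k ∈ Finset.univ.erase i, (1 - u k) := by
      rw [← Finset.prod_mul_distrib]
      exact Finset.prod_congr rfl fun k _ => by ring
    rw [hPu, hDu', hPdecomp, hFeval (u i), hsq]
    have h1 : (∏ j, ((1:K) + v j)) ≠ 0 := Finset.prod_ne_zero_iff.mpr fun j _ => hv j
    have h3 : (∏ j, ((1:K) + u i * v j)) ≠ 0 := Finset.prod_ne_zero_iff.mpr fun j _ => h i j
    have h4 : (∏ k ∈ Finset.univ.erase i, ∏ j, ((1:K) + u k * v j)) ≠ 0 :=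
      Finset.prod_ne_zero_iff.mpr fun k _ => Finset.prod_ne_zero_iff.mpr fun j _ => h k j
    field_simp
    ring
  have hF1 : F.eval 1 = ∏ j, (1 + v j) := by
    rw [hFeval]; exact Finset.prod_congr rfl fun j _ => by rw [one_mul]
  have hFm1 : F.eval (-1) = ∏ j, (1 - v j) := by
    rw [hFeval]; exact Finset.prod_congr rfl fun j _ => by ring
  rw [hM, det_sub_ones A', hdetA', hC,
    Finset.sum_congr rfl fun i _ => hterm i, ← Finset.sum_mul, star, hF1, hFm1]
  have h22 : (2:K) * 2⁻¹ = 1 := mul_inv_cancel₀ h2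
  linear_combination (-((∏ i, (1 + u i)) * (∏ j, (1 + v j)) * D * Dv * P⁻¹)) * h22

/-- N-matrix version: cleared of denominators. -/
theorem det_N_mul_eq {L : Type*} [Field L] (m : ℕ) (u v : Fin m → L)
    (h : ∀ i j, 1 + u i * v j ≠ 0) :
    (Matrix.of fun i j : Fin m => (u i + v j) *
        ∏ k ∈ Finset.univ.erase j, (1 + u i * v k)).det =
      (∏ i, ∏ j, (1 + u i * v j)) *
      (Matrix.of fun i j : Fin m => (u i + v j) / (1 + u i * v j)).det := by
  classical
  have hmat : (Matrix.of fun i j : Fin m => (u i + v j) *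
      ∏ k ∈ Finset.univ.erase j, (1 + u i * v k)) =
      Matrix.of fun i j : Fin m => (∏ k, (1 + u i * v k)) *
        ((u i + v j) / (1 + u i * v j)) := by
    ext i j
    simp only [Matrix.of_apply]
    rw [← Finset.mul_prod_erase Finset.univ _ (Finset.mem_univ j), div_eq_mul_inv]
    linear_combination (-((∏ k ∈ Finset.univ.erase j, (1 + u i * v k)) * (u i + v j))) *
      (mul_inv_cancel₀ (h i j))
  rw [hmat]
  exact Matrix.det_mul_column _ _

theorem two_mul_det_N {K : Type*} [Field K] [DecidableEq K] (h2 : (2:K) ≠ 0) (m : ℕ)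
    (u v : Fin m → K) (h : ∀ i j, 1 + u i * v j ≠ 0)
    (huinj : Function.Injective u) (hu1 : ∀ i, u i ≠ 1) (hum1 : ∀ i, u i ≠ -1)
    (hv : ∀ j, 1 + v j ≠ 0) :
    (2:K) * (Matrix.of fun i j : Fin m => (u i + v j) *
        ∏ k ∈ Finset.univ.erase j, (1 + u i * v k)).det =
      ((∏ i, (1 + u i)) * (∏ j, (1 + v j)) +
          (-1) ^ m * (∏ i, (1 - u i)) * (∏ j, (1 - v j))) *
      (∏ i, ∏ j ∈ Finset.Ioi i, (u i - u j)) *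
      (∏ i, ∏ j ∈ Finset.Ioi i, (v j - v i)) := by
  rw [det_N_mul_eq m u v h, det_cauchy_like_generic h2 m u v h huinj hu1 hum1 hv]
  have hPne : (∏ i, ∏ j, (1 + u i * v j)) ≠ 0 :=
    Finset.prod_ne_zero_iff.mpr fun i _ => Finset.prod_ne_zero_iff.mpr fun j _ => h i j
  field_simp

theorem poly_identity (m : ℕ) :
    (2 : MvPolynomial (Fin m ⊕ Fin m) ℤ) *
      (Matrix.of fun i j : Fin m =>
        (MvPolynomial.X (Sum.inl i) + MvPolynomial.X (Sum.inr j)) *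
        ∏ k ∈ Finset.univ.erase j,
          (1 + MvPolynomial.X (Sum.inl i) * MvPolynomial.X (Sum.inr k))).det =
    ((∏ i, (1 + MvPolynomial.X (Sum.inl i))) * (∏ j, (1 + MvPolynomial.X (Sum.inr j))) +
        (-1) ^ m * (∏ i, (1 - MvPolynomial.X (Sum.inl i))) *
          (∏ j, (1 - MvPolynomial.X (Sum.inr j)))) *
    (∏ i, ∏ j ∈ Finset.Ioi i, (MvPolynomial.X (Sum.inl i) - MvPolynomial.X (Sum.inl j))) *
    (∏ i, ∏ j ∈ Finset.Ioi i,
      (MvPolynomial.X (Sum.inr j) - MvPolynomial.X (Sum.inr i))) := by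
  classical
  set K := FractionRing (MvPolynomial (Fin m ⊕ Fin m) ℤ) with hK0
  set φ : MvPolynomial (Fin m ⊕ Fin m) ℤ →+* K :=
    algebraMap (MvPolynomial (Fin m ⊕ Fin m) ℤ) K with hφ
  have hinj : Function.Injective φ :=
    IsFractionRing.injective (MvPolynomial (Fin m ⊕ Fin m) ℤ) K
  -- nonzeroness via evaluation
  have key : ∀ (p : MvPolynomial (Fin m ⊕ Fin m) ℤ) (pt : Fin m ⊕ Fin m → ℤ), MvPolynomial.eval pt p ≠ 0 → φ p ≠ 0 := by
    intro p pt hp hcon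
    have hp0 : p = 0 := hinj (by rw [hcon, map_zero])
    rw [hp0, map_zero] at hp
    exact hp rfl
  set u : Fin m → K := fun i => φ (MvPolynomial.X (Sum.inl i)) with hu
  set v : Fin m → K := fun j => φ (MvPolynomial.X (Sum.inr j)) with hv'
  have h2 : (2:K) ≠ 0 := by
    have he : φ (2:MvPolynomial (Fin m ⊕ Fin m) ℤ) = (2:K) := map_ofNat φ 2
    rw [← he]
    refine key 2 (fun _ => 0) ?_
    have : MvPolynomial.eval (fun _ => (0:ℤ)) (2:MvPolynomial (Fin m ⊕ Fin m) ℤ) = 2 := map_ofNat _ 2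
    rw [this]
    norm_num
  have h : ∀ i j, 1 + u i * v j ≠ 0 := by
    intro i j
    have : (1:K) + u i * v j = φ (1 + MvPolynomial.X (Sum.inl i) * MvPolynomial.X (Sum.inr j)) := by
      simp [hu, hv']
    rw [this]
    exact key _ (fun _ => 0) (by simp)
  have huinj : Function.Injective u := by
    intro i j hij
    by_contra hne
    have hXne : φ (MvPolynomial.X (Sum.inl i) - MvPolynomial.X (Sum.inl j)) ≠ 0 := by
      refine key _ (fun s : Fin m ⊕ Fin m => if s = Sum.inl i then (1:ℤ) else 0) ?_
      have : MvPolynomial.eval (fun s : Fin m ⊕ Fin m => if s = Sum.inl i then (1:ℤ) else 0)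
          (MvPolynomial.X (Sum.inl i) - MvPolynomial.X (Sum.inl j)) = 1 := by
        rw [map_sub, MvPolynomial.eval_X, MvPolynomial.eval_X, if_pos rfl,
          if_neg (fun hh => hne (Sum.inl.inj hh).symm)]
        ring
      rw [this]
      norm_num
    rw [map_sub] at hXne
    apply hXne
    rw [sub_eq_zero]
    exact hij
  have hu1 : ∀ i, u i ≠ 1 := by
    intro i hcon
    have : φ (MvPolynomial.X (Sum.inl i) - 1) ≠ 0 :=
      key _ (fun _ => 0) (by simp)
    rw [map_sub, _root_.map_one, sub_ne_zero] at this
    exact this hcon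
  have hum1 : ∀ i, u i ≠ -1 := by
    intro i hcon
    have : φ (MvPolynomial.X (Sum.inl i) + 1) ≠ 0 :=
      key _ (fun _ => 0) (by simp)
    rw [map_add, _root_.map_one] at this
    exact this (by
      rw [show φ (MvPolynomial.X (Sum.inl i)) = u i from rfl, hcon]; ring)
  have hvh : ∀ j, (1:K) + v j ≠ 0 := by
    intro j hcon
    have : φ (1 + MvPolynomial.X (Sum.inr j)) ≠ 0 :=
      key _ (fun _ => 0) (by simp)
    rw [map_add, _root_.map_one] at this
    exact this hcon
  have hK := two_mul_det_N h2 m u v h huinj hu1 hum1 hvh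
  -- now pull back along φ
  apply hinj
  have hdet : φ ((Matrix.of fun i j : Fin m =>
      (MvPolynomial.X (Sum.inl i) + MvPolynomial.X (Sum.inr j)) *
      ∏ k ∈ Finset.univ.erase j,
        (1 + MvPolynomial.X (Sum.inl i) * MvPolynomial.X (Sum.inr k))).det) =
      (Matrix.of fun i j : Fin m => (u i + v j) *
        ∏ k ∈ Finset.univ.erase j, (1 + u i * v k)).det := by
    rw [RingHom.map_det]
    congr 1
    ext i j
    simp [RingHom.mapMatrix_apply, map_prod, hu, hv']
  rw [_root_.map_mul, hdet]
  rw [show φ 2 = (2:K) from map_ofNat φ 2]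
  rw [hK]
  simp only [_root_.map_mul, _root_.map_add, _root_.map_sub, _root_.map_one, map_pow,
    map_neg, map_prod]
  rfl

/-- Determinant of the Cauchy-like matrix with entries (u_i+v_j)/(1+u_i v_j). -/
theorem det_cauchy_like {F : Type*} [Field F] (h2 : (2 : F) ≠ 0) (m : ℕ) (u v : Fin m → F)
    (h : ∀ i j, 1 + u i * v j ≠ 0) :
    (Matrix.of fun i j : Fin m => (u i + v j) / (1 + u i * v j)).det =
      (2 : F)⁻¹ *
        ((∏ i : Fin m, (1 + u i)) * (∏ j : Fin m, (1 + v j)) +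
          (-1) ^ m * (∏ i : Fin m, (1 - u i)) * (∏ j : Fin m, (1 - v j))) *
      (∏ i : Fin m, ∏ j ∈ Finset.Ioi i, (u i - u j)) *
      (∏ i : Fin m, ∏ j ∈ Finset.Ioi i, (v j - v i)) *
      (∏ i : Fin m, ∏ j : Fin m, (1 + u i * v j))⁻¹ := by
  classical
  set ψ : MvPolynomial (Fin m ⊕ Fin m) ℤ →+* F :=
    MvPolynomial.eval₂Hom (Int.castRingHom F) (Sum.elim u v) with hψ
  have hψX : ∀ s, ψ (MvPolynomial.X s) = Sum.elim u v s := fun s => by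
    rw [hψ]; simp
  have hid := congrArg ψ (poly_identity m)
  have hdet : ψ ((Matrix.of fun i j : Fin m =>
      (MvPolynomial.X (Sum.inl i) + MvPolynomial.X (Sum.inr j)) *
      ∏ k ∈ Finset.univ.erase j,
        (1 + MvPolynomial.X (Sum.inl i) * MvPolynomial.X (Sum.inr k))).det) =
      (Matrix.of fun i j : Fin m => (u i + v j) *
        ∏ k ∈ Finset.univ.erase j, (1 + u i * v k)).det := by
    rw [RingHom.map_det]
    congr 1
    ext i j
    simp [RingHom.mapMatrix_apply, map_prod, hψX]
  rw [_root_.map_mul, hdet, show ψ 2 = (2:F) from map_ofNat ψ 2] at hid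
  simp only [_root_.map_mul, _root_.map_add, _root_.map_sub, _root_.map_one, map_pow,
    map_neg, map_prod, hψX, Sum.elim_inl, Sum.elim_inr] at hid
  rw [det_N_mul_eq m u v h] at hid
  have hPne : (∏ i, ∏ j, (1 + u i * v j)) ≠ 0 :=
    Finset.prod_ne_zero_iff.mpr fun i _ => Finset.prod_ne_zero_iff.mpr fun j _ => h i j
  field_simp
  linear_combination hid
end

section
/- Let $x_1,\dots,x_m,y_1,\dots,y_m$ be elements of a field of characteristic $\neq 2$ with $1+x_iy_j\neq 0$, $1+x_i\neq 0$, $1+y_j\neq 0$ for all $i,j$. Let $W$ be the $(m+1)\times(m+1)$ matrix whose $(0,0)$ entry is $0$, whose remaining entries in row $0$ and column $0$ are all $1$, and whose $(i,j)$ entry for $1\le i,j\le m$ is $\frac{x_i+y_j}{1+x_iy_j}$. Then $\det W = -\frac{1}{2}\Big(\prod_{i=1}^m(1+x_i)\prod_{j=1}^m(1+y_j) - (-1)^m\prod_{i=1}^m(1-x_i)\prod_{j=1}^m(1-y_j)\Big) \cdot \prod_{1\le i<j\le m}(x_i-x_j)\prod_{1\le i<j\le m}(y_j-y_i)\prod_{i,j=1}^m(1+x_iy_j)^{-1}$.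 -/
open Matrix Finset

private lemma cauchy_det {F : Type*} [Field F] :
    ∀ (m : ℕ) (x y : Fin m → F), (∀ i j, 1 + x i * y j ≠ 0) →
    (Matrix.of fun i j => (1 + x i * y j)⁻¹).det =
      (∏ i : Fin m, ∏ j ∈ Finset.Ioi i, (x i - x j)) *
      (∏ i : Fin m, ∏ j ∈ Finset.Ioi i, (y j - y i)) *
      (∏ i : Fin m, ∏ j : Fin m, (1 + x i * y j))⁻¹ := by
  intro m
  induction m with
  | zero => intro x y h; simp [Matrix.det_isEmpty]
  | succ n ih =>
    intro x y h
    set u : Fin (n+1) → F := Fin.cons 1 (fun i => x 0 - x i.succ) with hu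
    set M3 : Matrix (Fin (n+1)) (Fin (n+1)) F :=
      Matrix.of (Fin.cons (fun _ => (1:F)) (fun i j => y j * (1 + x i.succ * y j)⁻¹)) with hM3
    -- Step 1: subtract row 0 from each other row, and factor
    have step1 : (Matrix.of fun i j => (1 + x i * y j)⁻¹).det
        = (Matrix.of fun i j : Fin (n+1) =>
            (1 + x 0 * y j)⁻¹ * ((Matrix.of fun i j => u i * M3 i j) i j)).det := by
      apply det_eq_of_forall_row_eq_smul_add_const (Fin.cons 0 (fun _ => (1:F))) 0
        (Fin.cons_zero _ _)
      intro i j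
      refine Fin.cases ?_ (fun i => ?_) i
      · simp [hu, hM3]
      · simp only [Matrix.of_apply, Fin.cons_succ, Fin.cons_zero, hu, hM3]
        have h1 := h 0 j
        have h2 := h i.succ j
        have h1' : 1 + y j * x 0 ≠ 0 := by rwa [mul_comm]
        have h2' : 1 + y j * x i.succ ≠ 0 := by rwa [mul_comm]
        field_simp
        ring
    rw [step1, det_mul_row, det_mul_column]
    -- Step 2: subtract column 0 of M3 from each other column (as rows of transpose)
    set B : Matrix (Fin (n+1)) (Fin (n+1)) F :=
      Matrix.of (fun i j => M3ᵀ i j - (Fin.cons 0 (fun _ => (1:F)) : Fin (n+1) → F) i * M3ᵀ 0 j)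
      with hB
    have step2 : M3.det = B.det := by
      rw [← Matrix.det_transpose M3]
      apply det_eq_of_forall_row_eq_smul_add_const (Fin.cons 0 (fun _ => (1:F))) 0
        (Fin.cons_zero _ _)
      intro i j
      refine Fin.cases ?_ (fun i => ?_) i
      · simp [hB]
      · simp [hB, Fin.cons_succ, Fin.cons_zero]
    -- Step 3: expand along column 0 of B
    have hB0 : ∀ i, B i 0 = (Fin.cons 1 (fun _ => (0:F)) : Fin (n+1) → F) i := by
      intro i
      refine Fin.cases ?_ (fun i => ?_) i <;> simp [hB, hM3]
    have step3 : B.det = (B.submatrix Fin.succ Fin.succ).det := by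
      rw [Matrix.det_succ_column_zero, Fin.sum_univ_succ]
      simp [hB0, Fin.succAbove_zero]
    -- Step 4: identify the submatrix and factor
    have step4 : B.submatrix Fin.succ Fin.succ = Matrix.of fun i j : Fin n =>
        (y i.succ - y 0) * ((Matrix.of fun i j : Fin n => (1 + x j.succ * y 0)⁻¹ *
          ((Matrix.of fun i j : Fin n => (1 + x j.succ * y i.succ)⁻¹) i j)) i j) := by
      ext i j
      simp only [Matrix.submatrix_apply, hB, hM3, Matrix.of_apply, Matrix.transpose_apply,
        Fin.cons_succ]
      have h1 := h j.succ 0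
      have h2 := h j.succ i.succ
      have h1' : 1 + y 0 * x j.succ ≠ 0 := by rwa [mul_comm]
      have h2' : 1 + y i.succ * x j.succ ≠ 0 := by rwa [mul_comm]
      field_simp
      ring
    have step5 : (Matrix.of fun i j : Fin n => (1 + x j.succ * y i.succ)⁻¹).det
        = (Matrix.of fun i j : Fin n => (1 + x i.succ * y j.succ)⁻¹).det := by
      rw [← Matrix.det_transpose]
      rfl
    rw [step2, step3, step4, det_mul_column, det_mul_row, step5,
      ih (fun i => x i.succ) (fun j => y j.succ) (fun i j => h i.succ j.succ)]
    -- Step 6: combine all the products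
    have hx0 : (∏ j : Fin (n+1), (1 + x 0 * y j)) ≠ 0 :=
      Finset.prod_ne_zero_iff.mpr fun j _ => h 0 j
    have hy0 : (∏ j : Fin n, (1 + x j.succ * y 0)) ≠ 0 :=
      Finset.prod_ne_zero_iff.mpr fun j _ => h j.succ 0
    have hPs : (∏ i : Fin n, ∏ j : Fin n, (1 + x i.succ * y j.succ)) ≠ 0 :=
      Finset.prod_ne_zero_iff.mpr fun i _ => Finset.prod_ne_zero_iff.mpr fun j _ => h i.succ j.succ
    have hPf : (∏ i : Fin (n+1), ∏ j : Fin (n+1), (1 + x i * y j)) ≠ 0 :=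
      Finset.prod_ne_zero_iff.mpr fun i _ => Finset.prod_ne_zero_iff.mpr fun j _ => h i j
    simp only [hu, Fin.prod_univ_succ, Fin.cons_zero, Fin.cons_succ, Fin.prod_Ioi_zero,
      Fin.prod_Ioi_succ, Finset.prod_mul_distrib, mul_inv, Finset.prod_inv_distrib]
    ring_nf

/-- Determinant of the bordered Cauchy-like matrix W_m(x,y). -/
theorem det_bordered_cauchy {F : Type*} [Field F] (h2 : (2 : F) ≠ 0) (m : ℕ)
    (x y : Fin m → F)
    (hxy : ∀ i j, 1 + x i * y j ≠ 0)
    (hx : ∀ i, 1 + x i ≠ 0) (hy : ∀ j, 1 + y j ≠ 0) :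
    (Matrix.of (Fin.cons (Fin.cons (0 : F) fun _ => 1)
        (fun i => Fin.cons (1 : F) fun j => (x i + y j) / (1 + x i * y j)))).det =
      -(2 : F)⁻¹ *
        ((∏ i : Fin m, (1 + x i)) * (∏ j : Fin m, (1 + y j)) -
          (-1) ^ m * (∏ i : Fin m, (1 - x i)) * (∏ j : Fin m, (1 - y j))) *
      (∏ i : Fin m, ∏ j ∈ Finset.Ioi i, (x i - x j)) *
      (∏ i : Fin m, ∏ j ∈ Finset.Ioi i, (y j - y i)) *
      (∏ i : Fin m, ∏ j : Fin m, (1 + x i * y j))⁻¹ := by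
  have hA : True := trivial
  let A : Matrix (Fin m) (Fin m) F := Matrix.of fun i j => (x i + y j) / (1 + x i * y j)
  let W : F → Matrix (Fin (m+1)) (Fin (m+1)) F := fun t =>
    Matrix.of (Fin.cons (Fin.cons t fun _ => 1)
      (fun i => Fin.cons (1 : F) fun j => (x i + y j) / (1 + x i * y j)))
  show (W 0).det = _
  -- the submatrices obtained by deleting row 0 do not depend on t
  let S : (Fin m → Fin (m+1)) → Matrix (Fin m) (Fin m) F := fun p =>
    Matrix.of fun i j => (Fin.cons (1 : F) (fun j => (x i + y j) / (1 + x i * y j)) : Fin (m+1) → F) (p j)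
  have hsub : ∀ (t : F) (p : Fin m → Fin (m+1)),
      (W t).submatrix Fin.succ p = S p := by
    intro t p; ext i j
    simp [W, S, Fin.cons_succ]
  have hsubA : S ((0 : Fin (m+1)).succAbove) = A := by
    ext i j; simp [S, A, Fin.succAbove_zero, Fin.cons_succ]
  have haff : ∀ t : F, (W t).det = (W 0).det + t * A.det := by
    intro t
    rw [Matrix.det_succ_row_zero (W t), Matrix.det_succ_row_zero (W 0),
      Fin.sum_univ_succ, Fin.sum_univ_succ]
    simp only [hsub, hsubA]
    have e0 : ∀ t : F, (W t) 0 0 = t := by intro t; simp [W]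
    have es : ∀ (t : F) (j : Fin m), (W t) 0 j.succ = 1 := by intro t j; simp [W, Fin.cons_succ]
    simp only [e0, es]
    simp only [Fin.val_zero, pow_zero, one_mul, zero_mul, zero_add, mul_one]
    exact add_comm _ _
  -- evaluate at t = 1
  have f1 : (W 1).det = (Matrix.of fun i j : Fin m => A i j - 1).det := by
    set B : Matrix (Fin (m+1)) (Fin (m+1)) F :=
      Matrix.of (fun i j => W 1 i j - (Fin.cons 0 (fun _ => (1:F)) : Fin (m+1) → F) i * W 1 0 j)
      with hB
    have e1 : (W 1).det = B.det := by
      apply det_eq_of_forall_row_eq_smul_add_const (Fin.cons 0 (fun _ => (1:F))) 0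
        (Fin.cons_zero _ _)
      intro i j
      refine Fin.cases ?_ (fun i => ?_) i
      · simp [hB]
      · simp [hB, Fin.cons_succ]
    have hB0 : ∀ i, B i 0 = (Fin.cons 1 (fun _ => (0:F)) : Fin (m+1) → F) i := by
      intro i
      refine Fin.cases ?_ (fun i => ?_) i <;> simp [hB, W, Fin.cons_succ]
    have e2 : B.det = (B.submatrix Fin.succ Fin.succ).det := by
      rw [Matrix.det_succ_column_zero, Fin.sum_univ_succ]
      simp [hB0, Fin.succAbove_zero]
    have e3 : B.submatrix Fin.succ Fin.succ = Matrix.of fun i j : Fin m => A i j - 1 := by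
      ext i j; simp [hB, W, A, Fin.cons_succ]
    rw [e1, e2, e3]
  -- evaluate at t = -1
  have fm1 : (W (-1)).det = -(Matrix.of fun i j : Fin m => A i j + 1).det := by
    set B : Matrix (Fin (m+1)) (Fin (m+1)) F :=
      Matrix.of (fun i j => W (-1) i j - (Fin.cons 0 (fun _ => (-1:F)) : Fin (m+1) → F) i * W (-1) 0 j)
      with hB
    have e1 : (W (-1)).det = B.det := by
      apply det_eq_of_forall_row_eq_smul_add_const (Fin.cons 0 (fun _ => (-1:F))) 0
        (Fin.cons_zero _ _)
      intro i j
      refine Fin.cases ?_ (fun i => ?_) i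
      · simp [hB]
      · simp [hB, Fin.cons_succ]
    have hB0 : ∀ i, B i 0 = (Fin.cons (-1) (fun _ => (0:F)) : Fin (m+1) → F) i := by
      intro i
      refine Fin.cases ?_ (fun i => ?_) i <;> simp [hB, W, Fin.cons_succ]
    have e2 : B.det = -(B.submatrix Fin.succ Fin.succ).det := by
      rw [Matrix.det_succ_column_zero, Fin.sum_univ_succ]
      simp [hB0, Fin.succAbove_zero]
    have e3 : B.submatrix Fin.succ Fin.succ = Matrix.of fun i j : Fin m => A i j + 1 := by
      ext i j; simp [hB, W, A, Fin.cons_succ]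
    rw [e1, e2, e3]
  -- factor the two shifted matrices
  have g1 : (Matrix.of fun i j : Fin m => A i j - 1) = Matrix.of fun i j : Fin m =>
      (1 - y j) * ((Matrix.of fun i j : Fin m => (-(1 - x i)) *
        ((Matrix.of fun i j : Fin m => (1 + x i * y j)⁻¹) i j)) i j) := by
    ext i j
    have h1 := hxy i j
    simp only [Matrix.of_apply, A]
    field_simp
    ring
  have g2 : (Matrix.of fun i j : Fin m => A i j + 1) = Matrix.of fun i j : Fin m =>
      (1 + y j) * ((Matrix.of fun i j : Fin m => (1 + x i) *
        ((Matrix.of fun i j : Fin m => (1 + x i * y j)⁻¹) i j)) i j) := by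
    ext i j
    have h1 := hxy i j
    simp only [Matrix.of_apply, A]
    field_simp
    ring
  have hneg : (∏ i : Fin m, (-(1 - x i))) = (-1) ^ m * ∏ i : Fin m, (1 - x i) := by
    rw [show (fun i : Fin m => -(1 - x i)) = fun i => (-1) * (1 - x i) from funext fun i => by ring,
      Finset.prod_mul_distrib, Finset.prod_const, Finset.card_univ, Fintype.card_fin]
  have key : (2:F) * (W 0).det = (W 1).det + (W (-1)).det := by
    rw [haff 1, haff (-1)]; ring
  have h20 : (W 0).det = 2⁻¹ * ((W 1).det + (W (-1)).det) := by
    rw [← key, inv_mul_cancel_left₀ h2]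
  rw [h20, f1, fm1, g1, g2, det_mul_row, det_mul_column, det_mul_row, det_mul_column,
    cauchy_det m x y hxy, hneg]
  ring
end

section
/- Let $p \equiv 1 \pmod 4$ be prime, $n=(p-1)/2$, $\zeta=e^{2\pi i/p}$, and let $r$ be an integer not divisible by $p$. Then $\prod_{j=1}^{n}(\zeta^{2rj}-\zeta^{-2rj}) = \left(\frac{r}{p}\right)\sqrt{p}$, where $(\tfrac{\cdot}{p})$ is the Legendre symbol and $\sqrt{p}$ is the positive square root. -/
open Finset

namespace GaussProdAux

noncomputable def Z (p : ℕ) : ℂ := Complex.exp (2 * Real.pi * Complex.I / p)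

lemma hZ (p : ℕ) [Fact p.Prime] : IsPrimitiveRoot (Z p) p :=
  Complex.isPrimitiveRoot_exp p (Fact.out (p := p.Prime)).ne_zero

lemma Z_ne_zero (p : ℕ) [Fact p.Prime] : Z p ≠ 0 :=
  (hZ p).ne_zero (Fact.out (p := p.Prime)).ne_zero

variable {p : ℕ} [hp : Fact p.Prime]

lemma zpow_congr {m k : ℤ} (h : (p:ℤ) ∣ m - k) : Z p ^ m = Z p ^ k := by
  have h1 : Z p ^ (m - k) = 1 := ((hZ p).zpow_eq_one_iff_dvd _).mpr h
  calc Z p ^ m = Z p ^ (m - k) * Z p ^ k := by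
        rw [← zpow_add₀ (Z_ne_zero p)]; ring_nf
    _ = Z p ^ k := by rw [h1, one_mul]

noncomputable def F (p : ℕ) (x : ZMod p) : ℂ := Z p ^ (x.val : ℤ) - Z p ^ (-(x.val : ℤ))

lemma F_cast (m : ℤ) : Z p ^ m - Z p ^ (-m) = F p (m : ZMod p) := by
  have : NeZero p := ⟨(Fact.out (p := p.Prime)).ne_zero⟩
  have hv : (((m : ZMod p)).val : ℤ) = m % p := ZMod.val_intCast m
  have hd : (p:ℤ) ∣ m - ((m : ZMod p)).val := by
    rw [hv, Int.emod_def]; exact ⟨m / p, by ring⟩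
  have hd2 : (p:ℤ) ∣ (-m) - (-(((m : ZMod p)).val : ℤ)) := by
    rw [neg_sub_neg]; exact dvd_sub_comm.mp hd
  rw [F, zpow_congr hd, zpow_congr hd2]

lemma F_neg (x : ZMod p) : F p (-x) = - F p x := by
  have : NeZero p := ⟨(Fact.out (p := p.Prime)).ne_zero⟩
  rcases eq_or_ne x 0 with rfl | hx
  · simp [F]
  · have hv : (-x).val = p - x.val := by rw [ZMod.neg_val, if_neg hx]
    have hvlt : x.val < p := x.val_lt
    have h1 : ((-x).val : ℤ) = (p : ℤ) - x.val := by rw [hv]; push_cast [Nat.le_of_lt hvlt]; ring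
    have e1 : Z p ^ (((-x).val : ℤ)) = Z p ^ (-(x.val : ℤ)) := by
      apply zpow_congr; rw [h1]; exact ⟨1, by ring⟩
    have e2 : Z p ^ (-((-x).val : ℤ)) = Z p ^ ((x.val : ℤ)) := by
      apply zpow_congr; rw [h1]; exact ⟨-1, by ring⟩
    rw [F, F, e1, e2]; ring

lemma prod_F_mul {n : ℕ} (hn : 2 * n + 1 = p) (a : ZMod p) (ha : a ≠ 0) :
    ∏ j ∈ Icc 1 n, F p (a * (j : ZMod p)) =
      (-1) ^ #((Icc 1 n).filter fun x : ℕ => n < (a * (x : ZMod p)).val) *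
        ∏ j ∈ Icc 1 n, F p ((j : ZMod p)) := by
  have : NeZero p := ⟨by omega⟩
  have hp2 : 2 ≤ p := hp.out.two_le
  set g : ℕ → ℕ := fun j => if n < (a * (j : ZMod p)).val then p - (a * (j : ZMod p)).val
    else (a * (j : ZMod p)).val with hg
  have hne : ∀ j ∈ Icc 1 n, a * (j : ZMod p) ≠ 0 := by
    intro j hj
    simp only [mem_Icc] at hj
    refine mul_ne_zero ha ?_
    rw [Ne, ZMod.natCast_eq_zero_iff]
    intro hdvd
    have := Nat.le_of_dvd (by omega) hdvd
    omega
  have hval : ∀ j ∈ Icc 1 n, 1 ≤ (a * (j : ZMod p)).val ∧ (a * (j : ZMod p)).val ≤ p - 1 := by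
    intro j hj
    have h1 := (a * (j : ZMod p)).val_lt
    have h2 : (a * (j : ZMod p)).val ≠ 0 := fun h => hne j hj ((ZMod.val_eq_zero _).mp h)
    omega
  have hgmem : ∀ j ∈ Icc 1 n, g j ∈ Icc 1 n := by
    intro j hj; have := hval j hj
    simp only [hg, mem_Icc]
    split <;> omega
  have hcast : ∀ j ∈ Icc 1 n, ((g j : ℕ) : ZMod p) = a * (j : ZMod p) ∨
      ((g j : ℕ) : ZMod p) = -(a * (j : ZMod p)) := by
    intro j hj
    have hv := hval j hj
    simp only [hg]
    split_ifs with h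
    · right
      have hle : (a * (j : ZMod p)).val ≤ p := by omega
      push_cast [Nat.cast_sub hle]
      rw [ZMod.natCast_self, ZMod.natCast_zmod_val]
      ring
    · left; exact ZMod.natCast_zmod_val _
  have cancel : ∀ j1 ∈ Icc 1 n, ∀ j2 ∈ Icc 1 n,
      (a * (j1 : ZMod p) = a * (j2 : ZMod p) ∨ a * (j1 : ZMod p) = -(a * (j2 : ZMod p))) →
      j1 = j2 := by
    intro j1 h1 j2 h2 hd
    simp only [mem_Icc] at h1 h2
    rcases hd with hd | hd
    · have := mul_left_cancel₀ ha hd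
      have e1 : ((j1 : ℕ) : ZMod p).val = j1 := ZMod.val_cast_of_lt (by omega)
      have e2 : ((j2 : ℕ) : ZMod p).val = j2 := ZMod.val_cast_of_lt (by omega)
      rw [← e1, ← e2, this]
    · exfalso
      have : a * ((j1 : ZMod p) + (j2 : ZMod p)) = 0 := by rw [mul_add, hd]; ring
      have h0 : ((j1 + j2 : ℕ) : ZMod p) = 0 := by
        push_cast
        exact (mul_eq_zero.mp this).resolve_left ha
      rw [ZMod.natCast_eq_zero_iff] at h0
      have := Nat.le_of_dvd (by omega) h0
      omega
  have key : ∀ j ∈ Icc 1 n, F p (a * (j : ZMod p)) =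
      (if n < (a * (j : ZMod p)).val then (-1 : ℂ) else 1) * F p ((g j : ZMod p)) := by
    intro j hj
    rcases hcast j hj with hc | hc <;> rw [hc]
    · rw [if_neg]; · ring
      intro h
      have hv := hval j hj
      have : ((g j : ℕ) : ZMod p) = -(a * (j : ZMod p)) := by
        simp only [hg, if_pos h]
        have hle : (a * (j : ZMod p)).val ≤ p := by omega
        push_cast [Nat.cast_sub hle]
        rw [ZMod.natCast_self, ZMod.natCast_zmod_val]; ring
      rw [hc] at this
      have h2 : (2 : ZMod p) * (a * (j : ZMod p)) = 0 := by
        rw [two_mul]; nth_rewrite 2 [this]; ring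
      have h2' : (2 : ZMod p) ≠ 0 := by
        rw [Ne, show ((2 : ZMod p)) = ((2 : ℕ) : ZMod p) by push_cast; ring,
          ZMod.natCast_eq_zero_iff]
        intro hdvd
        have := Nat.le_of_dvd (by omega) hdvd
        omega
      exact hne j hj ((mul_eq_zero.mp h2).resolve_left h2')
    · rw [F_neg]
      by_cases h : n < (a * (j : ZMod p)).val
      · rw [if_pos h]; ring
      · exfalso
        -- g j = val and cast = a*j; hc says cast = -(a*j).
        have : ((g j : ℕ) : ZMod p) = a * (j : ZMod p) := by
          simp only [hg, if_neg h]; exact ZMod.natCast_zmod_val _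
        rw [hc] at this
        have h2 : (2 : ZMod p) * (a * (j : ZMod p)) = 0 := by
          rw [two_mul]; nth_rewrite 1 [← this]; ring
        have h2' : (2 : ZMod p) ≠ 0 := by
          rw [Ne, show ((2 : ZMod p)) = ((2 : ℕ) : ZMod p) by push_cast; ring,
            ZMod.natCast_eq_zero_iff]
          intro hdvd
          have := Nat.le_of_dvd (by omega) hdvd
          omega
        exact hne j hj ((mul_eq_zero.mp h2).resolve_left h2')
  calc ∏ j ∈ Icc 1 n, F p (a * (j : ZMod p))
      = ∏ j ∈ Icc 1 n, ((if n < (a * (j : ZMod p)).val then (-1 : ℂ) else 1) *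
          F p ((g j : ZMod p))) := prod_congr rfl key
    _ = (∏ j ∈ Icc 1 n, if n < (a * (j : ZMod p)).val then (-1 : ℂ) else 1) *
          ∏ j ∈ Icc 1 n, F p ((g j : ZMod p)) := prod_mul_distrib
    _ = (-1) ^ #((Icc 1 n).filter fun x : ℕ => n < (a * (x : ZMod p)).val) *
          ∏ j ∈ Icc 1 n, F p ((j : ZMod p)) := by
      congr 1
      · rw [Finset.prod_ite, Finset.prod_const, Finset.prod_const_one, mul_one]
      · refine prod_bij (fun j _ => g j) hgmem ?_ ?_ (fun j hj => rfl)
        · intro j1 hj1 j2 hj2 heq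
          apply cancel j1 hj1 j2 hj2
          rcases hcast j1 hj1 with c1 | c1 <;> rcases hcast j2 hj2 with c2 | c2 <;>
            (have heq' : g j1 = g j2 := heq; rw [heq'] at c1)
          · left; exact c1.symm.trans c2
          · right; exact c1.symm.trans c2
          · right; rw [← neg_eq_iff_eq_neg]; exact (c2.symm.trans c1).symm
          · left; have := c1.symm.trans c2; exact neg_injective this
        · intro k hk
          obtain ⟨j, hj, hjk⟩ := surj_on_of_inj_on_of_card_le (fun j _ => g j) hgmem
            (fun j1 j2 hj1 hj2 heq => by
              apply cancel j1 hj1 j2 hj2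
              rcases hcast j1 hj1 with c1 | c1 <;> rcases hcast j2 hj2 with c2 | c2 <;>
                (have heq' : g j1 = g j2 := heq; rw [heq'] at c1)
              · left; exact c1.symm.trans c2
              · right; exact c1.symm.trans c2
              · right; rw [← neg_eq_iff_eq_neg]; exact (c2.symm.trans c1).symm
              · left; have := c1.symm.trans c2; exact neg_injective this)
            le_rfl k hk
          exact ⟨j, hj, hjk.symm⟩

lemma prod_unit_reindex (u : ZMod p) (hu : u ≠ 0) (f : ZMod p → ℂ) :
    ∏ k ∈ Icc 1 (p - 1), f (u * (k : ZMod p)) = ∏ k ∈ Icc 1 (p - 1), f ((k : ZMod p)) := by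
  have : NeZero p := ⟨hp.out.ne_zero⟩
  have h2 : 2 ≤ p := hp.out.two_le
  have hne : ∀ k ∈ Icc 1 (p - 1), u * (k : ZMod p) ≠ 0 := by
    intro k hk
    simp only [mem_Icc] at hk
    refine mul_ne_zero hu ?_
    rw [Ne, ZMod.natCast_eq_zero_iff]
    intro hd
    have := Nat.le_of_dvd (by omega) hd
    omega
  have hmem : ∀ k ∈ Icc 1 (p - 1), (u * (k : ZMod p)).val ∈ Icc 1 (p - 1) := by
    intro k hk
    have h1 := (u * (k : ZMod p)).val_lt
    have h0 : (u * (k : ZMod p)).val ≠ 0 := fun h => hne k hk ((ZMod.val_eq_zero _).mp h)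
    simp only [mem_Icc]; omega
  have hinj : ∀ k1 ∈ Icc 1 (p - 1), ∀ k2 ∈ Icc 1 (p - 1),
      (u * (k1 : ZMod p)).val = (u * (k2 : ZMod p)).val → k1 = k2 := by
    intro k1 h1 k2 h2' heq
    simp only [mem_Icc] at h1 h2'
    have : u * (k1 : ZMod p) = u * (k2 : ZMod p) := by
      rw [← ZMod.natCast_zmod_val (u * (k1 : ZMod p)), heq, ZMod.natCast_zmod_val]
    have hkk := mul_left_cancel₀ hu this
    have e1 : ((k1 : ℕ) : ZMod p).val = k1 := ZMod.val_cast_of_lt (by omega)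
    have e2 : ((k2 : ℕ) : ZMod p).val = k2 := ZMod.val_cast_of_lt (by omega)
    rw [← e1, ← e2, hkk]
  refine prod_bij (fun k _ => (u * (k : ZMod p)).val) hmem
    (fun k1 h1 k2 h2' heq => hinj k1 h1 k2 h2' heq) ?_ ?_
  · intro k hk
    obtain ⟨j, hj, hjk⟩ := surj_on_of_inj_on_of_card_le (fun (k : ℕ) _ => (u * (k : ZMod p)).val)
      hmem (fun k1 k2 h1 h2' heq => hinj k1 h1 k2 h2' heq) le_rfl k hk
    exact ⟨j, hj, hjk.symm⟩
  · intro k hk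
    rw [ZMod.natCast_zmod_val]

lemma prod_Z_pow_sub_one (hodd : p % 2 = 1) : ∏ k ∈ Icc 1 (p - 1), (Z p ^ (k : ℤ) - 1) = p := by
  have h2 : 2 ≤ p := hp.out.two_le
  have hIcc : Icc 1 (p - 1) = Ico 1 p := by
    rw [← Finset.Ico_add_one_right_eq_Icc]
    congr 1; omega
  have hpr : IsPrimitiveRoot (Z p) ((p - 1) + 1) := by
    rw [show (p - 1) + 1 = p by omega]; exact hZ p
  have base := hpr.prod_one_sub_pow_eq_order
  have heven : (-1 : ℂ) ^ (p - 1) = 1 := by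
    obtain ⟨m, hm⟩ : ∃ m, p - 1 = 2 * m := ⟨(p - 1) / 2, by omega⟩
    rw [hm, pow_mul]; norm_num
  calc ∏ k ∈ Icc 1 (p - 1), (Z p ^ (k : ℤ) - 1)
      = ∏ i ∈ range (p - 1), (Z p ^ ((1 + i : ℕ) : ℤ) - 1) := by
        rw [hIcc, Finset.prod_Ico_eq_prod_range]
    _ = ∏ i ∈ range (p - 1), (-1) * (1 - Z p ^ (i + 1)) := by
        refine prod_congr rfl fun i _ => ?_
        rw [show ((1 + i : ℕ) : ℤ) = ((i + 1 : ℕ) : ℤ) by push_cast; ring, zpow_natCast]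
        ring
    _ = (-1) ^ (p - 1) * ∏ i ∈ range (p - 1), (1 - Z p ^ (i + 1)) := by
        rw [prod_mul_distrib, prod_const, card_range]
    _ = (p : ℂ) := by
        rw [heven, base, one_mul, Nat.cast_sub (by omega : 1 ≤ p)]; ring

lemma prod_Z_two_pow_sub_one (hodd : p % 2 = 1) : ∏ k ∈ Icc 1 (p - 1), (Z p ^ (2 * (k : ℤ)) - 1) = p := by
  have : NeZero p := ⟨hp.out.ne_zero⟩
  have h2 : 2 ≤ p := hp.out.two_le
  set G : ZMod p → ℂ := fun x => Z p ^ (x.val : ℤ) - 1 with hG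
  have hGcast : ∀ m : ℤ, Z p ^ m - 1 = G ((m : ZMod p)) := by
    intro m
    have hv : (((m : ZMod p)).val : ℤ) = m % p := ZMod.val_intCast m
    have hd : (p : ℤ) ∣ m - ((m : ZMod p)).val := by
      rw [hv, Int.emod_def]; exact ⟨m / p, by ring⟩
    rw [hG]; simp only
    rw [zpow_congr hd]
  have h2ne : ((2 : ℕ) : ZMod p) ≠ 0 := by
    rw [Ne, ZMod.natCast_eq_zero_iff]
    intro hd
    have := Nat.le_of_dvd (by omega) hd
    omega
  calc ∏ k ∈ Icc 1 (p - 1), (Z p ^ (2 * (k : ℤ)) - 1)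
      = ∏ k ∈ Icc 1 (p - 1), G (((2 : ℕ) : ZMod p) * (k : ZMod p)) := by
        refine prod_congr rfl fun k _ => ?_
        rw [hGcast (2 * (k : ℤ))]
        congr 1
        push_cast; ring
    _ = ∏ k ∈ Icc 1 (p - 1), G ((k : ZMod p)) := prod_unit_reindex _ h2ne G
    _ = ∏ k ∈ Icc 1 (p - 1), (Z p ^ (k : ℤ) - 1) := by
        refine prod_congr rfl fun k _ => ?_
        rw [show ((k : ℕ) : ZMod p) = (((k : ℤ)) : ZMod p) by push_cast; ring ,
          ← hGcast (k : ℤ)]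
    _ = p := prod_Z_pow_sub_one hodd

lemma prod_F_full (hodd : p % 2 = 1) :
    ∏ k ∈ Icc 1 (p - 1), (Z p ^ (k : ℤ) - Z p ^ (-(k : ℤ))) = p := by
  have h2 : 2 ≤ p := hp.out.two_le
  have hsum : ∑ k ∈ Icc 1 (p - 1), k = (p - 1) / 2 * p := by
    have h1 : Icc 1 (p - 1) = Ico 1 p := by rw [← Finset.Ico_add_one_right_eq_Icc]; congr 1; omega
    rw [h1, Finset.sum_Ico_eq_sum_range]
    have hgauss := Finset.sum_range_id_mul_two p
    have h4 := Finset.sum_range_succ' (fun i => i) (p - 1)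
    rw [show p - 1 + 1 = p by omega] at h4
    have h5 : ∑ i ∈ range (p - 1), (i + 1) = ∑ i ∈ range (p - 1), (1 + i) :=
      Finset.sum_congr rfl fun i _ => by ring
    have h6 : (∑ i ∈ range (p - 1), (1 + i)) * 2 = p * (p - 1) := by
      rw [← h5]; omega
    have h7 : p * (p - 1) = ((p - 1) / 2 * p) * 2 := by
      have hq : p - 1 = 2 * ((p - 1) / 2) := by omega
      conv_lhs => rw [hq]
      ring
    omega
  have hptw : ∀ k ∈ Icc 1 (p - 1), Z p ^ (k : ℤ) - Z p ^ (-(k : ℤ)) =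
      (Z p)⁻¹ ^ k * (Z p ^ (2 * (k : ℤ)) - 1) := by
    intro k _
    have hi : (Z p)⁻¹ ^ k = Z p ^ (-(k : ℤ)) := by
      rw [inv_pow, ← zpow_natCast, ← zpow_neg]
    rw [hi, mul_sub, mul_one, ← zpow_add₀ (Z_ne_zero p)]
    ring_nf
  rw [prod_congr rfl hptw, prod_mul_distrib, prod_pow_eq_pow_sum, hsum, mul_comm ((p-1)/2) p,
    pow_mul, inv_pow, (hZ p).pow_eq_one, inv_one, one_pow, one_mul]
  exact prod_Z_two_pow_sub_one hodd

lemma prod_F_half_sq {n : ℕ} (hn : 2 * n + 1 = p) :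
    (∏ j ∈ Icc 1 n, (Z p ^ (j : ℤ) - Z p ^ (-(j : ℤ)))) ^ 2 = (-1) ^ n * p := by
  have hodd : p % 2 = 1 := by omega
  set f : ℕ → ℂ := fun k => Z p ^ (k : ℤ) - Z p ^ (-(k : ℤ)) with hf
  have hsplit : (∏ k ∈ Ioc 0 n, f k) * ∏ k ∈ Ioc n (p - 1), f k = ∏ k ∈ Ioc 0 (p - 1), f k :=
    Finset.prod_Ioc_consecutive f (by omega) (by omega)
  have hIcc : ∀ m : ℕ, Icc 1 m = Ioc 0 m := fun m => Finset.Icc_add_one_left_eq_Ioc 0 m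
  have hneg : ∀ j ∈ Icc 1 n, f (p - j) = -(f j) := by
    intro j hj
    simp only [mem_Icc] at hj
    have e1 : Z p ^ ((p - j : ℕ) : ℤ) = Z p ^ (-(j : ℤ)) := by
      apply zpow_congr
      rw [Nat.cast_sub (by omega : j ≤ p)]
      exact ⟨1, by ring⟩
    have e2 : Z p ^ (-((p - j : ℕ) : ℤ)) = Z p ^ ((j : ℤ)) := by
      apply zpow_congr
      rw [Nat.cast_sub (by omega : j ≤ p)]
      exact ⟨-1, by ring⟩
    rw [hf]; simp only
    rw [e1, e2]; ring
  have hsecond : ∏ k ∈ Ioc n (p - 1), f k = (-1) ^ n * ∏ j ∈ Icc 1 n, f j := by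
    have hbij : ∏ j ∈ Icc 1 n, (-(f j)) = ∏ k ∈ Ioc n (p - 1), f k := by
      refine prod_bij (fun (j : ℕ) _ => p - j) ?_ ?_ ?_ ?_
      · intro j hj; simp only [mem_Icc] at hj; simp only [mem_Ioc]; omega
      · intro j1 h1 j2 h2 heq
        have heq' : p - j1 = p - j2 := heq
        simp only [mem_Icc] at h1 h2; omega
      · intro k hk
        simp only [mem_Ioc] at hk
        exact ⟨p - k, by simp only [mem_Icc]; omega, by show p - (p - k) = k; omega⟩
      · intro j hj; exact (hneg j hj).symm
    rw [← hbij,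
      prod_congr rfl (fun j _ => by ring : ∀ j ∈ Icc 1 n, -(f j) = (-1 : ℂ) * f j),
      prod_mul_distrib, prod_const, Nat.card_Icc]
    norm_num
  have hfull : ∏ k ∈ Ioc 0 (p - 1), f k = p := by
    rw [← hIcc]; exact prod_F_full hodd
  have hkey : (∏ j ∈ Icc 1 n, f j) * ((-1) ^ n * ∏ j ∈ Icc 1 n, f j) = p := by
    rw [← hsecond, hIcc n, hsplit, hfull]
  have h1 : ((-1 : ℂ) ^ n) ^ 2 = 1 := by
    rw [← pow_mul, mul_comm, pow_mul]; norm_num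
  calc (∏ j ∈ Icc 1 n, f j) ^ 2
      = ((-1 : ℂ) ^ n) ^ 2 * (∏ j ∈ Icc 1 n, f j) ^ 2 := by rw [h1, one_mul]
    _ = (-1) ^ n * ((∏ j ∈ Icc 1 n, f j) * ((-1) ^ n * ∏ j ∈ Icc 1 n, f j)) := by ring
    _ = (-1) ^ n * p := by rw [hkey]

lemma trig_eq (θ : ℝ) : Complex.exp (θ * Complex.I) - Complex.exp (((-θ : ℝ) : ℂ) * Complex.I) =
    ((2 * Real.sin θ : ℝ) : ℂ) * Complex.I := by
  rw [Complex.exp_mul_I, Complex.exp_mul_I]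
  push_cast
  rw [Complex.cos_neg, Complex.sin_neg]
  ring

lemma prod_F_half_eq {n : ℕ} (hn : 2 * n + 1 = p) (hev : n % 2 = 0) :
    ∏ j ∈ Icc 1 n, (Z p ^ (j : ℤ) - Z p ^ (-(j : ℤ))) = (-1) ^ (n / 2) * Real.sqrt p := by
  have hppos : 0 < p := by omega
  have hptw : ∀ j ∈ Icc 1 n, Z p ^ (j : ℤ) - Z p ^ (-(j : ℤ)) =
      ((2 * Real.sin (2 * Real.pi * j / p) : ℝ) : ℂ) * Complex.I := by
    intro j hj
    have e1 : Z p ^ (j : ℤ) = Complex.exp (((2 * Real.pi * j / p : ℝ) : ℂ) * Complex.I) := by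
      rw [Z, ← Complex.exp_int_mul]
      congr 1
      push_cast
      field_simp
    have e2 : Z p ^ (-(j : ℤ)) =
        Complex.exp (((-(2 * Real.pi * j / p) : ℝ) : ℂ) * Complex.I) := by
      rw [Z, ← Complex.exp_int_mul]
      congr 1
      push_cast
      field_simp
    rw [e1, e2, trig_eq]
  rw [prod_congr rfl hptw, prod_mul_distrib, prod_const, Nat.card_Icc]
  have hIpow : Complex.I ^ (n + 1 - 1) = (-1 : ℂ) ^ (n / 2) := by
    rw [show n + 1 - 1 = 2 * (n / 2) by omega, pow_mul, Complex.I_sq]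
  rw [hIpow, ← Complex.ofReal_prod]
  set s : ℝ := ∏ j ∈ Icc 1 n, 2 * Real.sin (2 * Real.pi * j / p) with hs
  have hspos : 0 < s := by
    rw [hs]
    apply Finset.prod_pos
    intro j hj
    simp only [mem_Icc] at hj
    have hsin : 0 < Real.sin (2 * Real.pi * j / p) := by
      apply Real.sin_pos_of_pos_of_lt_pi
      · apply div_pos
        · have hj1 : (1 : ℝ) ≤ (j : ℝ) := by exact_mod_cast hj.1
          nlinarith [Real.pi_pos]
        · exact_mod_cast hppos
      · rw [div_lt_iff₀ (by exact_mod_cast hppos)]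
        have : (2 * j + 1 : ℝ) ≤ p := by exact_mod_cast (by omega : 2 * j + 1 ≤ p)
        nlinarith [Real.pi_pos]
    linarith
  have hsq := prod_F_half_sq hn
  rw [prod_congr rfl hptw, prod_mul_distrib, prod_const, Nat.card_Icc, hIpow,
    ← Complex.ofReal_prod, ← hs] at hsq
  have hev1 : ((-1 : ℂ)) ^ n = 1 := by
    rw [show n = 2 * (n / 2) by omega, pow_mul]; norm_num
  have hx : ((-1 : ℂ)) ^ (n / 2 * 2) = 1 := by
    rw [show n / 2 * 2 = n by omega]; exact hev1
  have hsq2 : ((s ^ 2 : ℝ) : ℂ) = ((p : ℝ) : ℂ) := by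
    push_cast
    calc ((s : ℂ)) ^ 2 = ((s : ℂ)) ^ 2 * (-1) ^ (n / 2 * 2) := by rw [hx, mul_one]
      _ = ((s : ℂ) * (-1) ^ (n / 2)) ^ 2 := by ring
      _ = (-1) ^ n * p := hsq
      _ = p := by rw [hev1, one_mul]
  have hsR : s ^ 2 = (p : ℝ) := by exact_mod_cast hsq2
  have hfin : s = Real.sqrt p := by
    rw [← hsR, Real.sqrt_sq hspos.le]
  rw [hfin]
  ring

lemma leg_two_sign {n : ℕ} (hp4 : p % 4 = 1) (hn : 2 * n + 1 = p) :
    (legendreSym p 2 : ℤ) = (-1) ^ (n / 2) := by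
  have h2 : p ≠ 2 := by omega
  rw [legendreSym.at_two h2, ZMod.χ₈_nat_eq_if_mod_eight]
  have h8 : p % 8 = 1 ∨ p % 8 = 5 := by omega
  rcases h8 with h | h
  · rw [if_neg (by omega), if_pos (Or.inl h)]
    exact (Even.neg_one_pow ⟨n / 4, by omega⟩).symm
  · rw [if_neg (by omega), if_neg (by omega)]
    exact (Odd.neg_one_pow ⟨n / 4, by omega⟩).symm

end GaussProdAux

/-- Gauss-type product evaluation for p ≡ 1 (mod 4). -/
theorem prod_zeta_pow_sub (p : ℕ) [Fact p.Prime] (hp : p % 4 = 1) (r : ℤ)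
    (hr : ¬ (p : ℤ) ∣ r) :
    ∏ j ∈ Finset.Icc 1 ((p - 1) / 2),
        (Complex.exp (2 * Real.pi * Complex.I / p) ^ (2 * r * (j : ℤ)) -
          Complex.exp (2 * Real.pi * Complex.I / p) ^ (-(2 * r * (j : ℤ)))) =
      (legendreSym p r : ℂ) * (Real.sqrt p : ℂ) := by
  open Finset GaussProdAux in
  have hpp : p.Prime := Fact.out
  have h2 : 2 ≤ p := hpp.two_le
  have hodd : p % 2 = 1 := by
    rcases hpp.eq_two_or_odd with h | h
    · omega
    · exact h
  set n := (p - 1) / 2 with hndef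
  have hn : 2 * n + 1 = p := by omega
  have hev : n % 2 = 0 := by omega
  have : NeZero p := ⟨by omega⟩
  have ha : (((2 * r : ℤ)) : ZMod p) ≠ 0 := by
    rw [Ne, ZMod.intCast_zmod_eq_zero_iff_dvd]
    intro hd
    rcases (Int.prime_iff_natAbs_prime.mpr (by simpa using hpp)).dvd_mul.mp hd with hd2 | hdr
    · have := Int.le_of_dvd (by norm_num) hd2
      have : p ≤ 2 := by exact_mod_cast this
      omega
    · exact hr hdr
  have step1 : ∏ j ∈ Finset.Icc 1 n,
        (Complex.exp (2 * Real.pi * Complex.I / p) ^ (2 * r * (j : ℤ)) -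
          Complex.exp (2 * Real.pi * Complex.I / p) ^ (-(2 * r * (j : ℤ)))) =
      ∏ j ∈ Finset.Icc 1 n, F p ((((2 * r : ℤ)) : ZMod p) * (j : ZMod p)) := by
    refine Finset.prod_congr rfl fun j hj => ?_
    rw [show Complex.exp (2 * Real.pi * Complex.I / p) = Z p from rfl,
      F_cast (2 * r * (j : ℤ))]
    congr 1
    push_cast
    ring
  rw [step1, prod_F_mul hn _ ha]
  have hcount := ZMod.gauss_lemma (p := p) (a := 2 * r) (by omega) ha
  rw [Nat.succ_eq_add_one, Finset.Ico_add_one_right_eq_Icc, show p / 2 = n by omega] at hcount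
  have hsign : ((-1 : ℂ)) ^
      #((Finset.Icc 1 n).filter fun x : ℕ => n < ((((2 * r : ℤ)) : ZMod p) * (x : ZMod p)).val) =
      ((legendreSym p (2 * r) : ℤ) : ℂ) := by
    rw [hcount]
    push_cast
    ring
  rw [hsign]
  have hhalfprod : ∏ j ∈ Finset.Icc 1 n, F p ((j : ZMod p)) =
      (-1) ^ (n / 2) * Real.sqrt p := by
    rw [← prod_F_half_eq hn hev]
    refine Finset.prod_congr rfl fun j hj => ?_
    have hc := F_cast (p := p) (j : ℤ)
    rw [show (((j : ℕ) : ℤ) : ZMod p) = ((j : ZMod p)) by push_cast; ring] at hc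
    exact hc.symm
  rw [hhalfprod, legendreSym.mul, leg_two_sign hp hn]
  have h1 : ((-1 : ℂ)) ^ (n / 2) * ((-1 : ℂ)) ^ (n / 2) = 1 := by
    rw [← pow_add, show n / 2 + n / 2 = 2 * (n / 2) by ring, pow_mul]
    norm_num
  push_cast
  linear_combination ((legendreSym p r : ℂ) * (Real.sqrt p : ℂ)) * h1
end

section
/- Let $p \equiv 1 \pmod 4$ be prime, $n = (p-1)/2$, $\zeta = e^{2\pi i/p}$, and $\zeta^{1/2} = e^{\pi i/p}$. Then $\prod_{j=1}^{n}(\zeta^{j/2} - \zeta^{-j/2}) = \left(\frac{2}{p}\right)\sqrt{p} = (-1)^{(p-1)/4}\sqrt{p}$. -/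
open Finset

lemma exp_sub_exp_neg' (θ : ℝ) :
    Complex.exp ((θ : ℂ) * Complex.I) - Complex.exp (-((θ : ℂ) * Complex.I)) =
      2 * (Real.sin θ : ℂ) * Complex.I := by
  rw [show -((θ:ℂ) * Complex.I) = ((-θ : ℝ) : ℂ) * Complex.I by push_cast; ring,
    Complex.exp_mul_I, Complex.exp_mul_I, Complex.ofReal_sin, Complex.ofReal_neg,
    Complex.cos_neg, Complex.sin_neg]
  ring

lemma normSq_one_sub_exp' (θ : ℝ) :
    Complex.normSq (1 - Complex.exp (((2*θ : ℝ) : ℂ) * Complex.I)) = (2 * Real.sin θ)^2 := by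
  have h : (1 : ℂ) - Complex.exp (((2*θ : ℝ) : ℂ) * Complex.I)
      = ((1 - Real.cos (2*θ) : ℝ) : ℂ) + ((-Real.sin (2*θ) : ℝ) : ℂ) * Complex.I := by
    rw [Complex.exp_mul_I, ← Complex.ofReal_cos, ← Complex.ofReal_sin]
    push_cast; ring
  rw [h, Complex.normSq_add_mul_I, Real.cos_two_mul, Real.sin_two_mul]
  nlinarith [Real.sin_sq_add_cos_sq θ]

/-- Product of half-exponent differences equals (2/p)√p = (-1)^((p-1)/4)√p. -/
theorem prod_half_zeta (p : ℕ) [Fact p.Prime] (hp : p % 4 = 1) :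
    (∏ j ∈ Finset.Icc 1 ((p - 1) / 2),
        (Complex.exp (Real.pi * Complex.I / p) ^ (j : ℤ) -
          Complex.exp (Real.pi * Complex.I / p) ^ (-(j : ℤ)))) =
      (legendreSym p 2 : ℂ) * (Real.sqrt p : ℂ) ∧
    (∏ j ∈ Finset.Icc 1 ((p - 1) / 2),
        (Complex.exp (Real.pi * Complex.I / p) ^ (j : ℤ) -
          Complex.exp (Real.pi * Complex.I / p) ^ (-(j : ℤ)))) =
      (-1) ^ ((p - 1) / 4) * (Real.sqrt p : ℂ) := by
  have hprime := (Fact.out : p.Prime)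
  obtain ⟨m, hm⟩ : ∃ m, p = 4*m+1 := ⟨p/4, by omega⟩
  have hm2 : (p - 1) / 2 = 2*m := by omega
  have hm4 : (p - 1) / 4 = m := by omega
  have hp0 : (0:ℝ) < p := by exact_mod_cast hprime.pos
  have hpne : (p:ℝ) ≠ 0 := hp0.ne'
  -- the factors
  have key : ∀ j : ℕ,
      Complex.exp (Real.pi * Complex.I / p) ^ (j : ℤ) -
        Complex.exp (Real.pi * Complex.I / p) ^ (-(j : ℤ)) =
      2 * (Real.sin (Real.pi * j / p) : ℂ) * Complex.I := by
    intro j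
    rw [zpow_neg, zpow_natCast, ← Complex.exp_nat_mul, ← Complex.exp_neg]
    have h1 : (j:ℂ) * ((Real.pi:ℂ) * Complex.I / p) = ((Real.pi * j / p : ℝ) : ℂ) * Complex.I := by
      push_cast; field_simp
    rw [h1, exp_sub_exp_neg']
  -- product of squares of sines
  set ζ : ℂ := Complex.exp (2 * Real.pi * Complex.I / p) with hζdef
  have hζ : IsPrimitiveRoot ζ p := Complex.isPrimitiveRoot_exp p hprime.ne_zero
  have hζpow : ∀ j : ℕ, ζ ^ j = Complex.exp (((2 * (Real.pi * j / p) : ℝ) : ℂ) * Complex.I) := by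
    intro j
    rw [hζdef, ← Complex.exp_nat_mul]
    congr 1
    push_cast; field_simp
  have hprod : ∏ k ∈ range (p-1), (1 - ζ ^ (k+1)) = (p : ℂ) := by
    have h := IsPrimitiveRoot.prod_one_sub_pow_eq_order (n := p - 1) (μ := ζ)
      (by rwa [Nat.sub_add_cancel hprime.one_lt.le])
    rw [h, Nat.cast_sub hprime.one_lt.le]
    ring
  have hnormSq : ∏ k ∈ range (p-1), (2 * Real.sin (Real.pi * (k+1) / p))^2 = (p:ℝ)^2 := by
    have := congrArg Complex.normSq hprod
    rw [map_prod, Complex.normSq_natCast] at this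
    rw [sq, ← this]
    refine Finset.prod_congr rfl fun k _ => ?_
    rw [hζpow (k+1), normSq_one_sub_exp']
    push_cast; ring_nf
  -- reindex to Icc 1 (p-1) = Ioc 0 (4m)
  set S : ℕ → ℝ := fun j => (2 * Real.sin (Real.pi * j / p))^2 with hS
  have hIoc : ∏ j ∈ Ioc 0 (4*m), S j = (p:ℝ)^2 := by
    rw [← hnormSq]
    refine Finset.prod_nbij' (fun a => a - 1) (fun a => a + 1) ?_ ?_ ?_ ?_ ?_ <;>
      simp only [Finset.mem_Ioc, Finset.mem_range] <;> intro a ha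
    · omega
    · omega
    · omega
    · omega
    · have : (a : ℝ) = ((a - 1 : ℕ) : ℝ) + 1 := by
        have : 1 ≤ a := ha.1
        push_cast [Nat.cast_sub this]; ring
      simp only [hS, this]
  -- reflection: second half equals first half
  have hrefl : ∏ j ∈ Ioc (2*m) (4*m), S j = ∏ j ∈ Ioc 0 (2*m), S j := by
    refine Finset.prod_nbij' (fun a => p - a) (fun a => p - a) ?_ ?_ ?_ ?_ ?_ <;>
      simp only [Finset.mem_Ioc] <;> intro a ha
    · omega
    · omega
    · omega
    · omega
    · have hc : ((p - a : ℕ) : ℝ) = p - a := by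
        have : a ≤ p := by omega
        push_cast [Nat.cast_sub this]; ring
      simp only [hS, hc]
      have : Real.pi * ((p:ℝ) - a) / p = Real.pi - Real.pi * a / p := by
        field_simp
      rw [this, Real.sin_pi_sub]
  have hsplit : (∏ j ∈ Ioc 0 (2*m), S j) * ∏ j ∈ Ioc (2*m) (4*m), S j = (p:ℝ)^2 := by
    rw [Finset.prod_Ioc_consecutive _ (by omega) (by omega), hIoc]
  set R : ℝ := ∏ j ∈ Icc 1 (2*m), 2 * Real.sin (Real.pi * j / p) with hR
  have hRpos : 0 < R := by
    refine Finset.prod_pos fun j hj => ?_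
    rw [Finset.mem_Icc] at hj
    have h1 : 0 < Real.pi * j / p := by
      have : (0:ℝ) < j := by exact_mod_cast hj.1
      positivity
    have h2 : Real.pi * j / p < Real.pi := by
      rw [div_lt_iff₀ hp0]
      have : (j:ℝ) < p := by exact_mod_cast (by omega : j < p)
      nlinarith [Real.pi_pos]
    nlinarith [Real.sin_pos_of_pos_of_lt_pi h1 h2]
  have hIccIoc : (Icc 1 (2*m) : Finset ℕ) = Ioc 0 (2*m) := Finset.Icc_add_one_left_eq_Ioc 0 (2*m)
  have hR2 : R^2 = ∏ j ∈ Ioc 0 (2*m), S j := by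
    rw [hR, hIccIoc, ← Finset.prod_pow]
  have hR2p : R^2 = (p:ℝ) := by
    have h4 : (R^2)^2 = (p:ℝ)^2 := by
      rw [hR2]; rw [hrefl] at hsplit; rw [← hsplit]; ring
    nlinarith [sq_nonneg R, hp0]
  have hRsqrt : R = Real.sqrt p := by
    rw [← hR2p, Real.sqrt_sq hRpos.le]
  -- compute the product
  have hmain : (∏ j ∈ Finset.Icc 1 ((p - 1) / 2),
      (Complex.exp (Real.pi * Complex.I / p) ^ (j : ℤ) -
        Complex.exp (Real.pi * Complex.I / p) ^ (-(j : ℤ)))) =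
      (-1 : ℂ)^m * (Real.sqrt p : ℂ) := by
    rw [hm2]
    calc ∏ j ∈ Icc 1 (2*m), (Complex.exp (Real.pi * Complex.I / p) ^ (j : ℤ) -
            Complex.exp (Real.pi * Complex.I / p) ^ (-(j : ℤ)))
        = ∏ j ∈ Icc 1 (2*m), (((2 * Real.sin (Real.pi * j / p) : ℝ) : ℂ) * Complex.I) := by
          refine Finset.prod_congr rfl fun j _ => ?_
          rw [key j]; push_cast; ring
      _ = ((R : ℝ) : ℂ) * Complex.I ^ (2*m) := by
          rw [Finset.prod_mul_distrib, Finset.prod_const, Nat.card_Icc, hR,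
            Complex.ofReal_prod]
          norm_num
      _ = (-1 : ℂ)^m * (Real.sqrt p : ℂ) := by
          rw [pow_mul, Complex.I_sq, hRsqrt]; ring
  constructor
  · rw [hmain]
    congr 1
    have hleg : legendreSym p 2 = (-1 : ℤ)^m := by
      rw [legendreSym.at_two (by omega : p ≠ 2), ZMod.χ₈_nat_eq_if_mod_eight]
      have h2 : p % 2 = 1 := by omega
      have h8 : p % 8 = 1 ∨ p % 8 = 5 := by omega
      have hne : ¬ p % 2 = 0 := by omega
      rcases h8 with h8 | h8
      · have hme : Even m := Nat.even_iff.mpr (by omega)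
        have hc : p % 8 = 1 ∨ p % 8 = 7 := Or.inl h8
        rw [if_neg hne, if_pos hc, hme.neg_one_pow]
      · have hmo : Odd m := Nat.odd_iff.mpr (by omega)
        have hc : ¬ (p % 8 = 1 ∨ p % 8 = 7) := by omega
        rw [if_neg hne, if_neg hc, hmo.neg_one_pow]
    rw [hleg]; push_cast; ring
  · rw [hmain, hm4]
end

section
/- Let $p \equiv 1 \pmod 4$ be prime, $n=(p-1)/2$, $\zeta=e^{2\pi i/p}$. Then $\prod_{j=1}^{n}(1+\zeta^{2j}) = \zeta^{n(n+1)/2}\left(\frac{2}{p}\right)$. -/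
open Finset Real

private lemma reindex (p k : ℕ) (hp : p = 4*k+1) (g : ℕ → ℝ) :
    ∏ j ∈ Finset.Ioc 0 (2*k), g (if j ≤ k then 2*j else p - 2*j)
      = ∏ m ∈ Finset.Ioc 0 (2*k), g m := by
  refine Finset.prod_nbij' (fun j => if j ≤ k then 2*j else p - 2*j)
    (fun m => if m % 2 = 0 then m / 2 else (p - m) / 2) ?_ ?_ ?_ ?_ ?_
  · intro a ha
    simp only [Finset.mem_Ioc] at *
    split <;> omega
  · intro a ha
    simp only [Finset.mem_Ioc] at *
    split <;> omega
  · intro a ha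
    simp only [Finset.mem_Ioc] at ha
    by_cases h : a ≤ k
    · rw [if_pos h, if_pos (by omega : 2*a % 2 = 0)]; omega
    · rw [if_neg h, if_neg (by omega : ¬((p - 2*a) % 2 = 0))]; omega
  · intro a ha
    simp only [Finset.mem_Ioc] at ha
    by_cases h : a % 2 = 0
    · rw [if_pos h, if_pos (by omega : a / 2 ≤ k)]; omega
    · rw [if_neg h, if_neg (by omega : ¬((p - a) / 2 ≤ k))]; omega
  · intro a _
    rfl

private lemma cos_prod (p k : ℕ) (hp : p = 4*k+1) :
    ∏ j ∈ Finset.Icc 1 (2*k), (2 * Real.cos (2*Real.pi*j/p)) = (-1 : ℝ)^k := by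
  have hppos : (0:ℝ) < p := by
    have : 0 < p := by omega
    exact_mod_cast this
  set G : ℕ → ℝ := fun m => Real.sin (2*Real.pi*m/p) with hG
  have gpos : ∀ m : ℕ, 0 < m → m ≤ 2*k → 0 < G m := by
    intro m h1 h2
    apply Real.sin_pos_of_pos_of_lt_pi
    · have : (0:ℝ) < m := by exact_mod_cast h1
      positivity
    · rw [div_lt_iff₀ hppos]
      have hm : (m:ℝ) * 2 < p := by
        have : m * 2 < p := by omega
        exact_mod_cast this
      have hpi : (0:ℝ) < Real.pi := Real.pi_pos
      nlinarith
  have key : ∀ j ∈ Finset.Icc 1 (2*k),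
      2 * Real.cos (2*Real.pi*j/p) = G (2*j) / G j := by
    intro j hj
    simp only [Finset.mem_Icc] at hj
    have hs : G j ≠ 0 := (gpos j (by omega) hj.2).ne'
    simp only [hG] at hs ⊢
    rw [show 2*Real.pi*((2*j : ℕ):ℝ)/p = 2*(2*Real.pi*j/p) by push_cast; ring,
      Real.sin_two_mul]
    field_simp
  rw [Finset.prod_congr rfl key, Finset.prod_div_distrib]
  have hIcc : Finset.Icc 1 (2*k) = Finset.Ioc 0 (2*k) := by
    ext x; simp; omega
  rw [hIcc]
  have hflip : ∀ j ∈ Finset.Ioc k (2*k), G (2*j) = -1 * G (p - 2*j) := by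
    intro j hj
    simp only [Finset.mem_Ioc] at hj
    have h2j : 2*j ≤ p := by omega
    simp only [hG]
    have hcast : ((p - 2*j : ℕ) : ℝ) = (p:ℝ) - (2*j : ℕ) := by
      push_cast [h2j]; ring
    rw [hcast,
      show 2*Real.pi*((p:ℝ) - ((2*j : ℕ):ℝ))/p
        = 2*Real.pi - 2*Real.pi*((2*j:ℕ):ℝ)/p by field_simp,
      Real.sin_sub, Real.sin_two_pi, Real.cos_two_pi]
    ring
  have hnum : ∏ j ∈ Finset.Ioc 0 (2*k), G (2*j)
      = (-1:ℝ)^k * ∏ m ∈ Finset.Ioc 0 (2*k), G m := by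
    have hcard : (Finset.Ioc k (2*k)).card = k := by
      rw [Nat.card_Ioc]; omega
    calc ∏ j ∈ Finset.Ioc 0 (2*k), G (2*j)
        = (∏ j ∈ Finset.Ioc 0 k, G (2*j)) * ∏ j ∈ Finset.Ioc k (2*k), G (2*j) :=
          (Finset.prod_Ioc_consecutive _ (Nat.zero_le k) (by omega)).symm
      _ = (∏ j ∈ Finset.Ioc 0 k, G (2*j)) *
            ((-1:ℝ)^k * ∏ j ∈ Finset.Ioc k (2*k), G (p - 2*j)) := by
          rw [Finset.prod_congr rfl hflip, Finset.prod_mul_distrib,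
            Finset.prod_const, hcard]
      _ = (-1:ℝ)^k * ((∏ j ∈ Finset.Ioc 0 k, G (if j ≤ k then 2*j else p - 2*j)) *
            ∏ j ∈ Finset.Ioc k (2*k), G (if j ≤ k then 2*j else p - 2*j)) := by
          rw [Finset.prod_congr rfl (fun j hj => by
              simp only [Finset.mem_Ioc] at hj
              rw [if_pos hj.2] : ∀ j ∈ Finset.Ioc 0 k, G (if j ≤ k then 2*j else p - 2*j) = G (2*j)),
            Finset.prod_congr rfl (fun j hj => by
              simp only [Finset.mem_Ioc] at hj
              rw [if_neg (by omega)] : ∀ j ∈ Finset.Ioc k (2*k), G (if j ≤ k then 2*j else p - 2*j) = G (p - 2*j))]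
          ring
      _ = (-1:ℝ)^k * ∏ j ∈ Finset.Ioc 0 (2*k), G (if j ≤ k then 2*j else p - 2*j) := by
          rw [Finset.prod_Ioc_consecutive _ (Nat.zero_le k) (by omega)]
      _ = (-1:ℝ)^k * ∏ m ∈ Finset.Ioc 0 (2*k), G m := by
          rw [reindex p k hp]
  rw [hnum]
  have hne : ∏ m ∈ Finset.Ioc 0 (2*k), G m ≠ 0 := by
    apply Finset.prod_ne_zero_iff.mpr
    intro m hm
    simp only [Finset.mem_Ioc] at hm
    exact (gpos m hm.1 hm.2).ne'
  field_simp

/-- ∏_{j=1}^{n} (1+ζ^{2j}) = ζ^{n(n+1)/2} (2/p). -/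
theorem prod_one_add_zeta_sq (p : ℕ) [Fact p.Prime] (hp : p % 4 = 1) :
    ∏ j ∈ Finset.Icc 1 ((p - 1) / 2),
        (1 + Complex.exp (2 * Real.pi * Complex.I / p) ^ (2 * j)) =
      Complex.exp (2 * Real.pi * Complex.I / p) ^
          (((p - 1) / 2) * ((p - 1) / 2 + 1) / 2) *
        (legendreSym p 2 : ℂ) := by
  have hp2 : 1 < p := (Fact.out : p.Prime).one_lt
  obtain ⟨k, hk⟩ : ∃ k, p = 4*k+1 := ⟨p/4, by omega⟩
  have hn : (p-1)/2 = 2*k := by omega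
  have hpC : (p:ℂ) ≠ 0 := by
    have : (0:ℕ) < p := by omega
    exact_mod_cast this.ne'
  set c : ℂ := 2 * Real.pi * Complex.I / p with hc
  have hexp : ∀ m : ℕ, Complex.exp c ^ m = Complex.exp (m * c) :=
    fun m => (Complex.exp_nat_mul c m).symm
  have key : ∀ j ∈ Finset.Icc 1 (2*k),
      1 + Complex.exp c ^ (2*j)
        = Complex.exp c ^ j * ((2 * Real.cos (2*Real.pi*j/p) : ℝ) : ℂ) := by
    intro j _
    rw [hexp, hexp]
    have h1 : ((2*j : ℕ):ℂ) * c = (j:ℕ) * c + (j:ℕ) * c := by push_cast; ring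
    rw [h1, Complex.exp_add]
    have h2 : ((j:ℕ):ℂ) * c = ((2*Real.pi*j/p : ℝ) : ℂ) * Complex.I := by
      rw [hc]; push_cast; field_simp
    rw [h2, Complex.exp_mul_I]
    push_cast
    linear_combination (Complex.sin (2 * (Real.pi:ℂ) * j / p))^2 * Complex.I_sq
      - Complex.sin_sq_add_cos_sq (2 * (Real.pi:ℂ) * j / p)
  rw [hn, Finset.prod_congr rfl key, Finset.prod_mul_distrib,
    Finset.prod_pow_eq_pow_sum]
  have hsum : ∑ j ∈ Finset.Icc 1 (2*k), j = k * (2*k+1) := by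
    have h1 : Finset.range (2*k+1) = insert 0 (Finset.Icc 1 (2*k)) := by
      ext x; simp; omega
    have h2 := Finset.sum_range_id_mul_two (2*k+1)
    rw [h1, Finset.sum_insert (by simp), zero_add] at h2
    have h3 : (2*k+1) * (2*k+1-1) = (k*(2*k+1))*2 := by
      rw [Nat.add_sub_cancel]; ring
    omega
  have hexpo : (2*k) * (2*k + 1) / 2 = k * (2*k+1) := by
    rw [show (2*k) * (2*k+1) = (k * (2*k+1)) * 2 by ring, Nat.mul_div_cancel _ two_pos]
  have hcosprod : ∏ j ∈ Finset.Icc 1 (2*k), ((2 * Real.cos (2*Real.pi*j/p) : ℝ) : ℂ)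
      = (-1:ℂ)^k := by
    rw [show ∏ j ∈ Finset.Icc 1 (2*k), ((2 * Real.cos (2*Real.pi*j/p) : ℝ) : ℂ)
        = ((∏ j ∈ Finset.Icc 1 (2*k), (2 * Real.cos (2*Real.pi*j/p)) : ℝ) : ℂ) by
        push_cast; rfl,
      cos_prod p k hk]
    push_cast; rfl
  have hleg : (legendreSym p 2 : ℂ) = (-1:ℂ)^k := by
    have hne2 : p ≠ 2 := by omega
    have h8 := ZMod.χ₈_nat_eq_if_mod_eight p
    rw [legendreSym.at_two hne2, h8]
    rcases Nat.even_or_odd k with he | ho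
    · have h81 : p % 8 = 1 := by obtain ⟨m, hm⟩ := he; omega
      rw [if_neg (by omega : ¬ p % 2 = 0), if_pos (Or.inl h81), he.neg_one_pow]
      norm_num
    · have h85 : p % 8 = 5 := by obtain ⟨m, hm⟩ := ho; omega
      rw [if_neg (by omega : ¬ p % 2 = 0), if_neg (by omega), ho.neg_one_pow]
      norm_num
  rw [hsum, hexpo, hcosprod, hleg]
end

section
/- Let $p$ be an odd prime, $n=(p-1)/2$, $\zeta=e^{2\pi i/p}$, and $g(x)=\prod_{k=0}^{n}(x-\zeta^{2k})$. Then for $p\equiv 1\pmod 4$ and any integer $k$ with $1\le k\le n$: $g'(\zeta^{2k})\, g(\zeta^{-2k}) = -p\,\zeta^{-3k}\,\zeta^{(p-1)/4}\,(\zeta^{2k}-1)$. -/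
open Polynomial

private lemma zpow_sum_aux {ζ : ℂ} (hζ0 : ζ ≠ 0) (s : Finset ℕ) (f : ℕ → ℤ) :
    ∏ i ∈ s, ζ ^ (f i) = ζ ^ (∑ i ∈ s, f i) := by
  classical
  induction s using Finset.cons_induction with
  | empty => simp
  | cons a s ha ih => rw [Finset.prod_cons, Finset.sum_cons, ih, zpow_add₀ hζ0]

/-- Evaluation of g'(ζ^{2k}) g(ζ^{-2k}) for p ≡ 1 (mod 4). -/
theorem deriv_g_mul_g (p : ℕ) (hp : p.Prime) (hp4 : p % 4 = 1) (k : ℕ)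
    (hk1 : 1 ≤ k) (hk : k ≤ (p - 1) / 2) :
    let ζ : ℂ := Complex.exp (2 * Real.pi * Complex.I / p)
    let g : Polynomial ℂ := ∏ t ∈ Finset.range ((p - 1) / 2 + 1), (X - C (ζ ^ (2 * t)))
    (Polynomial.derivative g).eval (ζ ^ (2 * k)) * g.eval (ζ ^ (-(2 * (k : ℤ)))) =
      -(p : ℂ) * ζ ^ (-(3 * (k : ℤ))) * ζ ^ ((p - 1) / 4) * (ζ ^ (2 * k) - 1) := by
  intro ζ g
  have hp2 := hp.two_le
  have hp5 : 5 ≤ p := by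
    rcases Nat.lt_or_ge p 5 with hlt | hge
    · interval_cases p <;> simp_all
    · exact hge
  set q := (p - 1) / 4 with hq
  set m := (p - 1) / 2 with hm
  have hpq : p = 4 * q + 1 := by omega
  have hmq : m = 2 * q := by omega
  have hp0 : p ≠ 0 := by omega
  have hg : g = ∏ t ∈ Finset.range (m + 1), (X - C (ζ ^ (2 * t))) := rfl
  have hζ : IsPrimitiveRoot ζ p := Complex.isPrimitiveRoot_exp p hp0
  have hζ0 : ζ ≠ 0 := Complex.exp_ne_zero _
  have hζp : ζ ^ p = 1 := hζ.pow_eq_one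
  have hζpz : ∀ c : ℤ, ζ ^ (c * (p : ℤ)) = 1 := by
    intro c
    rw [mul_comm, zpow_mul, zpow_natCast, hζp, one_zpow]
  have hcop : Nat.Coprime 2 p :=
    (hp.coprime_iff_not_dvd.mpr (fun hdvd => absurd (Nat.le_of_dvd two_pos hdvd) (by omega))).symm
  have hω : IsPrimitiveRoot (ζ ^ 2) p := hζ.pow_of_coprime 2 hcop
  set h : Polynomial ℂ := ∏ s ∈ Finset.range m, (X - C (ζ ^ (2 * (m + 1 + s)))) with hh
  have factor : X ^ p - C (1 : ℂ) = g * h := by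
    have hX := X_pow_sub_C_eq_prod hω (by omega : 0 < p) (one_pow p)
    rw [hX, show p = (m + 1) + m by omega, Finset.prod_range_add, hg, hh]
    congr 1
    · exact Finset.prod_congr rfl (fun t _ => by rw [mul_one, ← pow_mul])
    · exact Finset.prod_congr rfl (fun s _ => by rw [mul_one, ← pow_mul])
  set α : ℂ := ζ ^ (2 * k) with hα
  set β : ℂ := ζ ^ (-(2 * (k : ℤ))) with hβ
  have hkmem : k ∈ Finset.range (m + 1) := Finset.mem_range.mpr (by omega)
  have hgα : g.eval α = 0 := by
    rw [hg, eval_prod]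
    exact Finset.prod_eq_zero hkmem (by simp [hα])
  have hderiv : (derivative g).eval α * h.eval α = (p : ℂ) * α ^ (p - 1) := by
    have hd := congrArg (fun f : Polynomial ℂ => (derivative f).eval α) factor
    simp only [derivative_sub, derivative_C, derivative_X_pow, derivative_mul, sub_zero,
      eval_add, eval_mul, eval_pow, eval_natCast, eval_X, eval_C, hgα, zero_mul, add_zero,
      eval_sub] at hd
    simpa using hd.symm
  have hhα : h.eval α = ∏ s ∈ Finset.range m, (α - ζ ^ (2 * (m + 1 + s))) := by
    rw [hh, eval_prod]
    exact Finset.prod_congr rfl (fun s _ => by simp)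
  have term : ∀ t : ℕ, β - ζ ^ (2 * t) =
      (-(ζ ^ (2 * (t : ℤ) - 2 * k))) * (ζ ^ (2 * (k : ℤ)) - ζ ^ (-(2 * (t : ℤ)))) := by
    intro t
    rw [neg_mul, mul_sub, ← zpow_add₀ hζ0, ← zpow_add₀ hζ0,
      show 2 * (t : ℤ) - 2 * k + 2 * k = ((2 * t : ℕ) : ℤ) by push_cast; ring,
      show 2 * (t : ℤ) - 2 * k + -(2 * t) = -(2 * (k : ℤ)) by ring,
      zpow_natCast, hβ]
    ring
  have hsum : ∑ t ∈ Finset.range (m + 1), (2 * (t : ℤ) - 2 * (k : ℤ)) =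
      (m : ℤ) * (m + 1) - 2 * k * (m + 1) := by
    have h2 : (∑ t ∈ Finset.range (m + 1), (t : ℤ)) * 2 = ((m : ℤ) + 1) * m := by
      have h3 : (∑ t ∈ Finset.range (m + 1), t) * 2 = (m + 1) * m := by
        simpa using Finset.sum_range_id_mul_two (m + 1)
      rw [← Nat.cast_sum]
      exact_mod_cast h3
    rw [Finset.sum_sub_distrib, ← Finset.mul_sum, Finset.sum_const, Finset.card_range,
      nsmul_eq_mul]
    push_cast
    linarith [h2]
  have hzerocase : ζ ^ (2 * (k : ℤ)) - ζ ^ (-(2 * ((0 : ℕ) : ℤ))) = α - 1 := by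
    rw [hα, ← zpow_natCast ζ (2 * k)]
    push_cast
    norm_num
  have hprod2 : ∏ t ∈ Finset.range (m + 1), (ζ ^ (2 * (k : ℤ)) - ζ ^ (-(2 * (t : ℤ)))) =
      (α - 1) * h.eval α := by
    rw [Finset.prod_range_succ', mul_comm]
    congr 1
    · rw [hhα, ← Finset.prod_range_reflect
        (fun i => ζ ^ (2 * (k : ℤ)) - ζ ^ (-(2 * ((i + 1 : ℕ) : ℤ)))) m]
      refine Finset.prod_congr rfl (fun s hs => ?_)
      have hsm : s < m := Finset.mem_range.mp hs
      have hidx : m - 1 - s + 1 = m - s := by omega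
      rw [hidx]
      congr 1
      rw [← zpow_natCast ζ (2 * (m + 1 + s))]
      have hE : ((2 * (m + 1 + s) : ℕ) : ℤ) = -(2 * ((m - s : ℕ) : ℤ)) + 2 * (p : ℤ) := by
        omega
      rw [hE, zpow_add₀ hζ0, hζpz 2, mul_one]
  have hgβ : g.eval β = ((-1 : ℂ) ^ (m + 1) * ζ ^ ((m : ℤ) * (m + 1) - 2 * k * (m + 1))) *
      ((α - 1) * h.eval α) := by
    rw [hg, eval_prod]
    simp only [eval_sub, eval_X, eval_C]
    rw [Finset.prod_congr rfl (fun t _ => term t), Finset.prod_mul_distrib]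
    congr 1
    · calc ∏ t ∈ Finset.range (m + 1), -(ζ ^ (2 * (t : ℤ) - 2 * (k : ℤ)))
          = ∏ t ∈ Finset.range (m + 1), ((-1 : ℂ) * ζ ^ (2 * (t : ℤ) - 2 * (k : ℤ))) :=
            Finset.prod_congr rfl (fun t _ => by ring)
        _ = (-1 : ℂ) ^ (m + 1) * ζ ^ ((m : ℤ) * (m + 1) - 2 * k * (m + 1)) := by
            rw [Finset.prod_mul_distrib, Finset.prod_const, Finset.card_range,
              zpow_sum_aux hζ0, hsum]
  have hm1 : (-1 : ℂ) ^ (m + 1) = -1 := Odd.neg_one_pow ⟨q, by omega⟩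
  have hα' : α ^ (p - 1) = ζ ^ (2 * k * (p - 1)) := by rw [hα, ← pow_mul]
  have key2 : ζ ^ ((m : ℤ) * (m + 1) - 2 * k * (m + 1)) * ζ ^ (2 * k * (p - 1)) =
      ζ ^ (-(3 * (k : ℤ))) * ζ ^ q := by
    rw [← zpow_natCast ζ (2 * k * (p - 1)), ← zpow_natCast ζ q, ← zpow_add₀ hζ0,
      ← zpow_add₀ hζ0]
    have hE : ((m : ℤ) * (m + 1) - 2 * k * (m + 1)) + ((2 * k * (p - 1) : ℕ) : ℤ) =
        (-(3 * (k : ℤ)) + q) + ((q : ℤ) + k) * p := by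
      have e1 : ((2 * k * (p - 1) : ℕ) : ℤ) = 2 * k * (4 * q) := by
        push_cast [show p - 1 = 4 * q from by omega]
        ring
      rw [e1, hmq, hpq]
      push_cast
      ring
    rw [hE, zpow_add₀ hζ0, hζpz, mul_one]
  calc (derivative g).eval α * g.eval β
      = ((-1 : ℂ) ^ (m + 1) * (ζ ^ ((m : ℤ) * (m + 1) - 2 * k * (m + 1)) * (α - 1))) *
        ((derivative g).eval α * h.eval α) := by rw [hgβ]; ring
    _ = ((-1 : ℂ) ^ (m + 1) * (ζ ^ ((m : ℤ) * (m + 1) - 2 * k * (m + 1)) * (α - 1))) *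
        ((p : ℂ) * α ^ (p - 1)) := by rw [hderiv]
    _ = -(p : ℂ) * ζ ^ (-(3 * (k : ℤ))) * ζ ^ q * (α - 1) := by
        rw [hm1, hα']
        linear_combination (-(p : ℂ) * (α - 1)) * key2
end
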